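/- arXiv:2402.07522 — 7 statements merged into one kernel-verified Lean document; each statement's English description precedes it below -/
import Mathlib

section
/- Let B = ⊕_{n∈ℤ} B_n be a ℤ-graded commutative ring and suppose f ∈ B_d is invertible in B for some d > 0. Then the morphism of graded rings φ_f : B_0[t, t^{-1}] → B^{(d)} = ⊕_{n ∈ dℤ} B_n sending t to f is an isomorphism. -/
section aux
variable {B : Type} [CommRing B] (𝒜 : ℤ → AddSubgroup B) [GradedRing 𝒜]

def gz : (𝒜 0) →+* B where
  toFun := fun x => (x : B)
  map_one' := rfl
  map_mul' := fun _ _ => rfl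
  map_zero' := rfl
  map_add' := fun _ _ => rfl

lemma inv_mem_aux {d : ℤ} (u : Bˣ) (hu : (u : B) ∈ 𝒜 d) :
    ((u⁻¹ : Bˣ) : B) ∈ 𝒜 (-d) := by
  set w : B := (DirectSum.decompose 𝒜 ((u⁻¹ : Bˣ) : B) (-d) : B) with hw
  have h1 : (u : B) * w = 1 := by
    have h := DirectSum.coe_decompose_mul_add_of_left_mem 𝒜 (b := ((u⁻¹ : Bˣ) : B)) (j := -d) hu
    rw [Units.mul_inv, add_neg_cancel] at h
    rw [hw, ← h, DirectSum.decompose_of_mem_same 𝒜 (SetLike.one_mem_graded 𝒜)]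
  have h2 : ((u⁻¹ : Bˣ) : B) = w := by
    calc ((u⁻¹ : Bˣ) : B) = ((u⁻¹ : Bˣ) : B) * ((u : B) * w) := by rw [h1, mul_one]
    _ = (((u⁻¹ : Bˣ) : B) * (u : B)) * w := by ring
    _ = w := by rw [Units.inv_mul, one_mul]
  rw [h2]; exact SetLike.coe_mem _

lemma zpow_mem_aux {d : ℤ} (u : Bˣ) (hu : (u : B) ∈ 𝒜 d) (m : ℤ) :
    ((u ^ m : Bˣ) : B) ∈ 𝒜 (d * m) := by
  have hpow : ∀ n : ℕ, ((u ^ (n : ℤ) : Bˣ) : B) ∈ 𝒜 (d * n) := by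
    intro n
    have h1 : ((u ^ (n : ℤ) : Bˣ) : B) = (u : B) ^ n := by
      rw [zpow_natCast]; push_cast; rfl
    rw [h1]
    have := SetLike.pow_mem_graded n hu
    convert this using 2
    simp [mul_comm]
  obtain ⟨n, rfl | rfl⟩ := Int.eq_nat_or_neg m
  · exact hpow n
  · rw [zpow_neg]
    have := inv_mem_aux 𝒜 (u ^ (n : ℤ)) (hpow n)
    rwa [show d * -(n:ℤ) = -(d * n) by ring]
end aux

theorem stmt4 (B : Type) [CommRing B] (𝒜 : ℤ → AddSubgroup B) [GradedRing 𝒜]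
    (d : ℤ) (hd : 0 < d) (u : Bˣ) (hu : (u : B) ∈ 𝒜 d) :
    ∃ φ : AddMonoidAlgebra (𝒜 0) ℤ →+* B,
      (∀ (m : ℤ) (b : 𝒜 0), φ (AddMonoidAlgebra.single m b) = (b : B) * ↑(u ^ m)) ∧
      Function.Injective φ ∧
      Set.range φ = {x : B | ∀ k : ℤ, ¬ d ∣ k → (DirectSum.decompose 𝒜 x k : B) = 0} ∧
      ∀ (m : ℤ) (b : 𝒜 0), φ (AddMonoidAlgebra.single m b) ∈ 𝒜 (d * m) := by
  classical
  set g : Multiplicative ℤ →* B := (Units.coeHom B).comp (zpowersHom Bˣ u) with hg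
  set φ : AddMonoidAlgebra (𝒜 0) ℤ →+* B :=
    AddMonoidAlgebra.liftNCRingHom (gz 𝒜) g (fun _ _ => Commute.all _ _) with hφ
  have hd0 : d ≠ 0 := hd.ne'
  have hs : ∀ (m : ℤ) (b : 𝒜 0), φ (AddMonoidAlgebra.single m b) = (b : B) * ↑(u ^ m) := by
    intro m b
    simp only [hφ, AddMonoidAlgebra.liftNCRingHom, hg, RingHom.coe_mk, MonoidHom.coe_mk,
      OneHom.coe_mk, MonoidHom.coe_comp, AddMonoidHom.toFun_eq_coe, ZeroHom.toFun_eq_coe,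
      AddMonoidAlgebra.liftNC_single, Function.comp_apply,
      zpowersHom_apply, Units.coeHom_apply, toAdd_ofAdd]
    erw [AddMonoidAlgebra.liftNC_single]
    simp [gz]
    rfl
  have hmem : ∀ (m : ℤ) (b : 𝒜 0), φ (AddMonoidAlgebra.single m b) ∈ 𝒜 (d * m) := by
    intro m b
    rw [hs]
    have := SetLike.mul_mem_graded b.2 (zpow_mem_aux 𝒜 u hu m)
    rwa [zero_add] at this
  have hsum : ∀ p : AddMonoidAlgebra (𝒜 0) ℤ,
      φ p = ∑ m ∈ p.coeff.support, (↑(p.coeff m) : B) * ↑(u ^ m) := by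
    intro p
    conv_lhs => rw [← AddMonoidAlgebra.sum_coeff_single p]
    rw [Finsupp.sum, map_sum]
    exact Finset.sum_congr rfl fun m _ => hs m (p.coeff m)
  have hdec : ∀ (p : AddMonoidAlgebra (𝒜 0) ℤ) (m₀ : ℤ),
      (DirectSum.decompose 𝒜 (φ p) (d * m₀) : B) = (↑(p.coeff m₀) : B) * ↑(u ^ m₀) := by
    intro p m₀
    rw [← GradedRing.proj_apply, hsum, map_sum]
    rw [Finset.sum_eq_single m₀]
    · rw [GradedRing.proj_apply, DirectSum.decompose_of_mem_same 𝒜 (hs m₀ (p.coeff m₀) ▸ hmem m₀ (p.coeff m₀))]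
    · intro m _ hne
      rw [GradedRing.proj_apply, DirectSum.decompose_of_mem_ne 𝒜 (hs m (p.coeff m) ▸ hmem m (p.coeff m))]
      exact fun h => hne (by exact mul_left_cancel₀ hd0 h)
    · intro hm₀
      rw [Finsupp.notMem_support_iff.mp hm₀]
      simp
  have hnd : ∀ (p : AddMonoidAlgebra (𝒜 0) ℤ) (k : ℤ), ¬ d ∣ k →
      (DirectSum.decompose 𝒜 (φ p) k : B) = 0 := by
    intro p k hk
    rw [← GradedRing.proj_apply, hsum, map_sum]
    apply Finset.sum_eq_zero
    intro m _
    rw [GradedRing.proj_apply, DirectSum.decompose_of_mem_ne 𝒜 (hs m (p.coeff m) ▸ hmem m (p.coeff m))]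
    exact fun h => hk ⟨m, h.symm⟩
  refine ⟨φ, hs, ?_, ?_, hmem⟩
  · rw [injective_iff_map_eq_zero]
    intro p hp
    ext m
    have := hdec p m
    rw [hp, DirectSum.decompose_zero] at this
    simp only [DirectSum.zero_apply, AddSubgroup.coe_zero, ZeroMemClass.coe_zero] at this
    have h0 : (↑(p.coeff m) : B) = 0 := (Units.mul_left_eq_zero (u ^ m)).mp this.symm
    exact h0
  · ext x
    constructor
    · rintro ⟨p, rfl⟩ k hk
      exact hnd p k hk
    · intro hx
      have key : ∀ k ∈ DFinsupp.support (DirectSum.decompose 𝒜 x),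
          (DirectSum.decompose 𝒜 x k : B) * ↑(u ^ (-(k / d))) ∈ 𝒜 0 := by
        intro k hk
        by_cases hdk : d ∣ k
        · have := SetLike.mul_mem_graded (DirectSum.decompose 𝒜 x k).2
            (zpow_mem_aux 𝒜 u hu (-(k / d)))
          rwa [show k + d * -(k / d) = 0 by
            rw [show k + d * -(k / d) = k - d * (k / d) by ring,
              Int.mul_ediv_cancel' hdk, sub_self]] at this
        · rw [hx k hdk, zero_mul]; exact zero_mem _
      set p : AddMonoidAlgebra (𝒜 0) ℤ :=
        ∑ k ∈ DFinsupp.support (DirectSum.decompose 𝒜 x),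
          if hk : k ∈ DFinsupp.support (DirectSum.decompose 𝒜 x) then
            AddMonoidAlgebra.single (k / d)
              (⟨(DirectSum.decompose 𝒜 x k : B) * ↑(u ^ (-(k / d))), key k hk⟩ : 𝒜 0)
          else 0 with hp
      refine ⟨p, ?_⟩
      rw [hp, map_sum]
      refine Eq.trans (Finset.sum_congr rfl fun k hk => ?_) (DirectSum.sum_support_decompose 𝒜 x)
      rw [dif_pos hk, hs]
      have : (↑(u ^ (-(k / d))) : B) * ↑(u ^ (k / d)) = 1 := by
        rw [zpow_neg, ← Units.val_mul, inv_mul_cancel, Units.val_one]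
      push_cast
      rw [mul_assoc, this, mul_one]
end

section
/- Let B = ⊕_{n∈ℤ} B_n be a ℤ-graded commutative ring with B_0 a field, and let d > 0 be minimal such that B_d contains a unit f of B. If e is not divisible by d and g ∈ B_e, then g^d = 0 in B. -/
open DirectSum

/-- If a unit of `B` lies in `𝒜 i`, there is a unit lying in `𝒜 (-i)`. -/
lemma aux_inv_unit (B : Type) [CommRing B] (𝒜 : ℤ → AddSubgroup B) [GradedRing 𝒜]
    (i : ℤ) (v : Bˣ) (hv : (v : B) ∈ 𝒜 i) :
    ∃ w : Bˣ, (w : B) ∈ 𝒜 (-i) := by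
  set y : B := (DirectSum.decompose 𝒜 ((↑v⁻¹ : B)) (-i) : B) with hy
  have hmul : y * v = 1 := by
    have := DirectSum.coe_decompose_mul_add_of_right_mem 𝒜 (a := (↑v⁻¹ : B)) (i := -i) hv
    rw [hy, ← this, neg_add_cancel, Units.inv_mul]
    exact DirectSum.decompose_of_mem_same 𝒜 SetLike.GradedOne.one_mem
  refine ⟨⟨y, v, hmul, by rw [mul_comm]; exact hmul⟩, ?_⟩
  exact SetLike.coe_mem _

/-- A unit in each degree `q * d` for `q : ℤ`. -/
lemma aux_unit_zsmul (B : Type) [CommRing B] (𝒜 : ℤ → AddSubgroup B) [GradedRing 𝒜]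
    (i : ℤ) (v : Bˣ) (hv : (v : B) ∈ 𝒜 i) (q : ℤ) :
    ∃ w : Bˣ, (w : B) ∈ 𝒜 (q * i) := by
  obtain ⟨w, hw⟩ := aux_inv_unit B 𝒜 i v hv
  rcases le_or_gt 0 q with h | h
  · lift q to ℕ using h
    refine ⟨v ^ q, ?_⟩
    have := SetLike.pow_mem_graded (A := 𝒜) q hv
    simpa [zsmul_eq_mul] using this
  · obtain ⟨n, rfl⟩ : ∃ n : ℕ, q = -(n : ℤ) := ⟨q.natAbs, by omega⟩
    refine ⟨w ^ n, ?_⟩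
    have := SetLike.pow_mem_graded (A := 𝒜) n hw
    rw [nsmul_eq_mul] at this
    have h2 : (n : ℤ) * (-i) = -(n : ℤ) * i := by ring
    rwa [h2] at this

/-- If `B₀` is a field and `d > 0` is minimal such that `B_d` contains a unit of `B`, then
any homogeneous `g` of degree `e` not divisible by `d` satisfies `g ^ d = 0`. -/
theorem stmt5 (B : Type) [CommRing B] (𝒜 : ℤ → AddSubgroup B) [GradedRing 𝒜]
    (hfield : IsField (𝒜 0)) (d : ℕ) (hd : 0 < d) (u : Bˣ) (hu : (u : B) ∈ 𝒜 (d : ℤ))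
    (hmin : ∀ d' : ℕ, 0 < d' → (∃ v : Bˣ, (v : B) ∈ 𝒜 (d' : ℤ)) → d ≤ d')
    (e : ℤ) (he : ¬ (d : ℤ) ∣ e) (g : B) (hg : g ∈ 𝒜 e) :
    g ^ d = 0 := by
  by_contra hne
  -- g^d ∈ 𝒜 (d*e)
  have hgd : g ^ d ∈ 𝒜 ((e : ℤ) * (d : ℤ)) := by
    have := SetLike.pow_mem_graded (A := 𝒜) d hg
    rw [nsmul_eq_mul] at this
    rwa [mul_comm] at this
  -- unit in degree -(e*d)
  obtain ⟨v, hv⟩ := aux_unit_zsmul B 𝒜 (d : ℤ) u hu (-e)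
  have hv' : (v : B) ∈ 𝒜 (-(e * (d : ℤ))) := by rwa [neg_mul] at hv
  -- t := g^d * v ∈ 𝒜 0
  have ht : g ^ d * (v : B) ∈ 𝒜 0 := by
    have := SetLike.mul_mem_graded hgd hv'
    rwa [add_neg_cancel] at this
  have htne : g ^ d * (v : B) ≠ 0 := by
    intro h
    apply hne
    have : g ^ d * (v : B) * (↑v⁻¹ : B) = 0 := by rw [h, zero_mul]
    rwa [mul_assoc, Units.mul_inv, mul_one] at this
  -- t is a unit since 𝒜 0 is a field
  obtain ⟨s, hs⟩ := hfield.mul_inv_cancel (a := ⟨g ^ d * (v : B), ht⟩)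
    (by simpa [Subtype.ext_iff] using htne)
  have hsB : (g ^ d * (v : B)) * (s : B) = 1 := congrArg Subtype.val hs
  have hgd_unit : IsUnit (g ^ d) := IsUnit.of_mul_eq_one ((v : B) * (s : B)) (by
    rw [← mul_assoc]; exact hsB)
  have hg_unit : IsUnit g := (isUnit_pow_iff hd.ne').mp hgd_unit
  obtain ⟨gu, hgu⟩ := hg_unit
  -- reduce degree mod d
  set q : ℤ := e / (d : ℤ)
  set r : ℤ := e % (d : ℤ)
  have hr0 : 0 ≤ r := Int.emod_nonneg e (by exact_mod_cast hd.ne')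
  have hrd : r < (d : ℤ) := Int.emod_lt_of_pos e (by exact_mod_cast hd)
  have hrne : r ≠ 0 := fun h => he (Int.dvd_of_emod_eq_zero h)
  obtain ⟨w, hw⟩ := aux_unit_zsmul B 𝒜 (d : ℤ) u hu (-q)
  have hwmem : (gu * w : B) ∈ 𝒜 r := by
    have := SetLike.mul_mem_graded (hgu ▸ hg) hw
    have h2 : e + -q * (d : ℤ) = r := by
      simp only [r, q, Int.emod_def]; ring
    rwa [h2] at this
  have := hmin r.toNat (by omega) ⟨gu * w, by rwa [Int.toNat_of_nonneg hr0]⟩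
  omega
end

section
/- Let B = ⊕_{n∈ℤ} B_n be a ℤ-graded commutative ring with B_0 a field, and let d > 0 be minimal such that B_d contains a unit f of B. Then the composite map B_0[t,t^{-1}] → B^{(d)} ↪ B → B_red, sending t to the class of f, is an isomorphism of graded rings. -/
open DirectSum

section aux
variable {B : Type} [CommRing B] (𝒜 : ℤ → AddSubgroup B) [GradedRing 𝒜]

/-- The inverse of a homogeneous unit is homogeneous of opposite degree. -/
theorem stmt6_inv_mem {n : ℤ} (w : Bˣ) (hw : (w : B) ∈ 𝒜 n) :
    ((w⁻¹ : Bˣ) : B) ∈ 𝒜 (-n) := by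
  set z : B := ((w⁻¹ : Bˣ) : B) with hz
  set c : B := (DirectSum.decompose 𝒜 z (-n) : B) with hc
  have key : (w : B) * c = 1 := by
    have h0 : ((DirectSum.decompose 𝒜 ((w : B) * z)) (n + -n) : B)
        = (w : B) * (DirectSum.decompose 𝒜 z (-n) : B) := by
      rw [DirectSum.decompose_mul, DirectSum.decompose_of_mem 𝒜 hw]
      exact DirectSum.coe_of_mul_apply_add (A := fun i => 𝒜 i) ⟨(w : B), hw⟩
        (DirectSum.decompose 𝒜 z) (-n)
    have h1 : (w : B) * z = 1 := by simp [hz]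
    rw [h1, add_neg_cancel] at h0
    rw [← h0, DirectSum.decompose_of_mem_same 𝒜 (SetLike.one_mem_graded 𝒜)]
  have : z = c := by
    calc z = z * ((w : B) * c) := by rw [key, mul_one]
    _ = (z * (w : B)) * c := by ring
    _ = c := by simp [hz]
  rw [this]
  exact SetLike.coe_mem _

theorem stmt6_zpow_mem {n : ℤ} (w : Bˣ) (hw : (w : B) ∈ 𝒜 n) (m : ℤ) :
    ((w ^ m : Bˣ) : B) ∈ 𝒜 (n * m) := by
  cases m with
  | ofNat k =>
      have := SetLike.pow_mem_graded (A := 𝒜) k hw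
      have h2 : ((w ^ (Int.ofNat k) : Bˣ) : B) = (w : B) ^ k := by
        simp [Int.ofNat_eq_natCast, zpow_natCast]
      rw [h2]
      convert this using 2
      simp [nsmul_eq_mul, Int.ofNat_eq_natCast, mul_comm]
  | negSucc k =>
      have hinv := stmt6_inv_mem 𝒜 w hw
      have := SetLike.pow_mem_graded (A := 𝒜) (k + 1) hinv
      have h2 : ((w ^ (Int.negSucc k) : Bˣ) : B) = ((w⁻¹ : Bˣ) : B) ^ (k + 1) := by
        rw [zpow_negSucc, ← inv_pow, Units.val_pow_eq_pow_val]
      rw [h2]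
      convert this using 2
      rw [Int.negSucc_eq]
      ring

theorem stmt6_isUnit (hfield : IsField (𝒜 0)) (d : ℕ) (hd : 0 < d) (u : Bˣ)
    (hu : (u : B) ∈ 𝒜 (d : ℤ)) {n : ℤ} {x : B} (hx : x ∈ 𝒜 n)
    (hnil : x ∉ nilradical B) : IsUnit x := by
  set a : B := x ^ d * ((u ^ (-n) : Bˣ) : B) with ha_def
  have ha : a ∈ 𝒜 0 := by
    have h1 := SetLike.pow_mem_graded (A := 𝒜) d hx
    have h2 := stmt6_zpow_mem 𝒜 u hu (-n)
    have := SetLike.mul_mem_graded h1 h2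
    convert this using 2
    simp [nsmul_eq_mul]
  have hanil : a ∉ nilradical B := by
    intro h
    apply hnil
    have h2 : a * ((((u ^ (-n) : Bˣ))⁻¹ : Bˣ) : B) ∈ nilradical B :=
      Ideal.mul_mem_right _ _ h
    have hxd : x ^ d ∈ nilradical B := by
      rwa [ha_def, mul_assoc, Units.mul_inv, mul_one] at h2
    rw [mem_nilradical] at hxd ⊢
    obtain ⟨k, hk⟩ := hxd
    exact ⟨d * k, by rw [pow_mul]; exact hk⟩
  have ha0 : a ≠ 0 := by
    intro h
    exact hanil (by rw [h]; exact (nilradical B).zero_mem)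
  obtain ⟨b, hb⟩ := hfield.mul_inv_cancel (by
    intro h
    exact ha0 (by simpa using congrArg (Subtype.val) h) : (⟨a, ha⟩ : 𝒜 0) ≠ 0)
  have hab : a * (b : B) = 1 := by
    have := congrArg (Subtype.val) hb
    exact this
  refine IsUnit.of_mul_eq_one (x ^ (d - 1) * (((u ^ (-n) : Bˣ) : B) * (b : B))) ?_
  calc x * (x ^ (d - 1) * (((u ^ (-n) : Bˣ) : B) * (b : B)))
      = (x ^ (d - 1) * x) * (((u ^ (-n) : Bˣ) : B) * (b : B)) := by ring
    _ = x ^ d * (((u ^ (-n) : Bˣ) : B) * (b : B)) := by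
        rw [← pow_succ, Nat.sub_add_cancel hd]
    _ = a * (b : B) := by rw [ha_def]; ring
    _ = 1 := hab

theorem stmt6_nilp (hfield : IsField (𝒜 0)) (d : ℕ) (hd : 0 < d) (u : Bˣ)
    (hu : (u : B) ∈ 𝒜 (d : ℤ))
    (hmin : ∀ d' : ℕ, 0 < d' → (∃ v : Bˣ, (v : B) ∈ 𝒜 (d' : ℤ)) → d ≤ d')
    {n : ℤ} {x : B} (hx : x ∈ 𝒜 n) (hnd : ¬ ((d : ℤ) ∣ n)) : x ∈ nilradical B := by
  by_contra h
  obtain ⟨w, hw⟩ := stmt6_isUnit 𝒜 hfield d hd u hu hx h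
  have hn0 : n ≠ 0 := fun h0 => hnd (h0 ▸ dvd_zero _)
  set g : ℕ := Int.gcd n d with hg
  have hg0 : 0 < g := Int.gcd_pos_of_ne_zero_left _ hn0
  have hgd : g ∣ d := by
    have := Int.gcd_dvd_right (a := n) (b := (d : ℤ))
    exact_mod_cast this
  have hgltd : g < d := by
    refine lt_of_le_of_ne (Nat.le_of_dvd hd hgd) ?_
    intro hgd'
    apply hnd
    have := Int.gcd_dvd_left (a := n) (b := (d : ℤ))
    rwa [← hg, hgd'] at this
  have hbezout : (g : ℤ) = n * Int.gcdA n d + (d : ℤ) * Int.gcdB n d :=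
    Int.gcd_eq_gcd_ab n d
  set v : Bˣ := w ^ (Int.gcdA n d) * u ^ (Int.gcdB n d) with hv
  have hvmem : (v : B) ∈ 𝒜 (g : ℤ) := by
    rw [hbezout, hv, Units.val_mul]
    exact SetLike.mul_mem_graded (stmt6_zpow_mem 𝒜 w (hw ▸ hx) _)
      (stmt6_zpow_mem 𝒜 u hu _)
  exact absurd (hmin g hg0 ⟨v, hvmem⟩) (not_le.mpr hgltd)

end aux

/-- Coercion ring hom from the degree-zero part. -/
def stmt6_coeRH {B : Type} [CommRing B] (𝒜 : ℤ → AddSubgroup B) [GradedRing 𝒜] :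
    (𝒜 0) →+* B where
  toFun := fun b => (b : B)
  map_one' := rfl
  map_mul' := fun _ _ => rfl
  map_zero' := rfl
  map_add' := fun _ _ => rfl

/-- If `B₀` is a field and `d > 0` is minimal such that `B_d` contains a unit `f = ↑u` of `B`,
then `B₀[t, t⁻¹] → B_red`, `t ↦ f mod Nil(B)`, is an isomorphism of graded rings (where `t`
has degree `d`, so the degree `d·m` component is sent into the image of `𝒜 (d·m)`). -/
theorem stmt6 (B : Type) [CommRing B] (𝒜 : ℤ → AddSubgroup B) [GradedRing 𝒜]
    (hfield : IsField (𝒜 0)) (d : ℕ) (hd : 0 < d) (u : Bˣ) (hu : (u : B) ∈ 𝒜 (d : ℤ))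
    (hmin : ∀ d' : ℕ, 0 < d' → (∃ v : Bˣ, (v : B) ∈ 𝒜 (d' : ℤ)) → d ≤ d') :
    ∃ ψ : AddMonoidAlgebra (𝒜 0) ℤ →+* B ⧸ nilradical B,
      (∀ (m : ℤ) (b : 𝒜 0), ψ (AddMonoidAlgebra.single m b) =
          Ideal.Quotient.mk (nilradical B) ((b : B) * ↑(u ^ m))) ∧
      Function.Bijective ψ ∧
      ∀ (m : ℤ) (b : 𝒜 0), ∃ c ∈ 𝒜 ((d : ℤ) * m),
        ψ (AddMonoidAlgebra.single m b) = Ideal.Quotient.mk (nilradical B) c := by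
  classical
  set mk : B →+* B ⧸ nilradical B := Ideal.Quotient.mk (nilradical B) with hmk
  set f : (𝒜 0) →+* B ⧸ nilradical B := mk.comp (stmt6_coeRH 𝒜) with hf
  set g : Multiplicative ℤ →* B ⧸ nilradical B :=
    mk.toMonoidHom.comp ((Units.coeHom B).comp (zpowersHom Bˣ u)) with hg
  set ψ : AddMonoidAlgebra (𝒜 0) ℤ →+* B ⧸ nilradical B :=
    AddMonoidAlgebra.liftNCRingHom f g (fun _ _ => Commute.all _ _) with hψdef
  have hψ : ∀ (m : ℤ) (b : 𝒜 0), ψ (AddMonoidAlgebra.single m b) =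
      mk ((b : B) * ((u ^ m : Bˣ) : B)) := by
    intro m b
    rw [hψdef]
    show AddMonoidAlgebra.liftNC (f : (𝒜 0) →+ B ⧸ nilradical B) g
      (AddMonoidAlgebra.single m b) = _
    rw [AddMonoidAlgebra.liftNC_single, map_mul]
    rfl
  -- membership of the canonical representatives
  have humem : ∀ m : ℤ, ((u ^ m : Bˣ) : B) ∈ 𝒜 ((d : ℤ) * m) := stmt6_zpow_mem 𝒜 u hu
  have hbu : ∀ (m : ℤ) (b : 𝒜 0), (b : B) * ((u ^ m : Bˣ) : B) ∈ 𝒜 ((d : ℤ) * m) := by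
    intro m b
    have := SetLike.mul_mem_graded b.2 (humem m)
    rwa [zero_add] at this
  refine ⟨ψ, hψ, ⟨?_, ?_⟩, ?_⟩
  · -- injectivity
    rw [injective_iff_map_eq_zero]
    intro p hp
    letI : Field (𝒜 0) := hfield.toField
    have hψp : ψ p = mk (p.coeff.sum fun m b => (b : B) * ((u ^ m : Bˣ) : B)) := by
      conv_lhs => rw [← AddMonoidAlgebra.sum_coeff_single p]
      rw [map_finsuppSum, map_finsuppSum]
      exact Finsupp.sum_congr fun m _ => hψ m _
    rw [hψp, hmk] at hp
    have hS : (p.coeff.sum fun m b => (b : B) * ((u ^ m : Bˣ) : B)) ∈ nilradical B :=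
      (Ideal.Quotient.eq_zero_iff_mem).mp hp
    have hhom : Ideal.IsHomogeneous 𝒜 (nilradical B) :=
      (Ideal.IsHomogeneous.bot 𝒜).radical
    have coe_pow : ∀ (x : 𝒜 0) (k : ℕ), ((x ^ k : 𝒜 0) : B) = (x : B) ^ k := by
      intro x k
      induction k with
      | zero => rfl
      | succ k ih => rw [pow_succ, pow_succ, ← ih]; rfl
    have hdne : ((d : ℤ)) ≠ 0 := by exact_mod_cast hd.ne'
    have hcomp : ∀ m : ℤ, GradedRing.proj 𝒜 ((d : ℤ) * m)
        (p.coeff.sum fun m' b => (b : B) * ((u ^ m' : Bˣ) : B)) = (p.coeff m : B) * ((u ^ m : Bˣ) : B) := by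
      intro m
      rw [Finsupp.sum, map_sum, Finset.sum_eq_single m]
      · rw [GradedRing.proj_apply, DirectSum.decompose_of_mem_same 𝒜 (hbu m (p.coeff m))]
      · intro m' _ hne
        rw [GradedRing.proj_apply,
          DirectSum.decompose_of_mem_ne 𝒜 (hbu m' (p.coeff m'))
            (fun h => hne (mul_left_cancel₀ hdne h))]
      · intro hm
        rw [Finsupp.notMem_support_iff.mp hm]
        simp
    have hpm : ∀ m : ℤ, p.coeff m = 0 := by
      intro m
      have h1 := hhom ((d : ℤ) * m) hS
      rw [← GradedRing.proj_apply, hcomp] at h1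
      have h2 := Ideal.mul_mem_right (((u ^ m : Bˣ)⁻¹ : Bˣ) : B) _ h1
      rw [mul_assoc, ← Units.val_mul, mul_inv_cancel, Units.val_one, mul_one] at h2
      obtain ⟨k, hk⟩ := mem_nilradical.mp h2
      have hk' : (p.coeff m) ^ k = 0 := by
        apply Subtype.ext
        rw [coe_pow, hk]
        rfl
      exact IsNilpotent.eq_zero ⟨k, hk'⟩
    exact AddMonoidAlgebra.coeff_eq_zero.mp (Finsupp.ext hpm)
  · -- surjectivity
    intro y
    obtain ⟨x, rfl⟩ := Ideal.Quotient.mk_surjective y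
    change ∃ q, ψ q = mk x
    induction x using DirectSum.Decomposition.inductionOn 𝒜 with
    | zero => exact ⟨0, by rw [map_zero, map_zero]⟩
    | @homogeneous i z =>
        by_cases hdvd : (d : ℤ) ∣ i
        · obtain ⟨m, hm⟩ := hdvd
          have hb : (z : B) * ((u ^ (-m) : Bˣ) : B) ∈ 𝒜 0 := by
            have := SetLike.mul_mem_graded z.2 (humem (-m))
            convert this using 2
            rw [hm]
            ring
          refine ⟨AddMonoidAlgebra.single m ⟨(z : B) * ((u ^ (-m) : Bˣ) : B), hb⟩, ?_⟩
          rw [hψ]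
          congr 1
          show ((z : B) * ((u ^ (-m) : Bˣ) : B)) * ((u ^ m : Bˣ) : B) = (z : B)
          rw [mul_assoc, ← Units.val_mul, ← zpow_add, neg_add_cancel, zpow_zero,
            Units.val_one, mul_one]
        · have : (z : B) ∈ nilradical B := stmt6_nilp 𝒜 hfield d hd u hu hmin z.2 hdvd
          exact ⟨0, by rw [map_zero, hmk, eq_comm, Ideal.Quotient.eq_zero_iff_mem]; exact this⟩
    | add x y hx hy =>
        obtain ⟨q1, hq1⟩ := hx
        obtain ⟨q2, hq2⟩ := hy
        exact ⟨q1 + q2, by rw [map_add, map_add, hq1, hq2]⟩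
  · -- graded pieces
    intro m b
    exact ⟨(b : B) * ((u ^ m : Bˣ) : B), hbu m b, hψ m b⟩
end

section
/- Let q be a prime power and a_0,...,a_n positive integers. Every F_q-rational point of P(a_0,...,a_n) has exactly q-1 representatives in F_q^{n+1} \ {0}. Consequently, the number of F_q-rational points of P(a_0,...,a_n) equals p_n = q^n + q^{n-1} + ... + q + 1. -/
noncomputable section

open MvPolynomial

/-- The weighted scalar equivalence on vectors: `x ∼ y` iff `y i = λ^{a i} * x i` for some
unit `λ`. -/
def wSetoid (K : Type) [Field K] (n : ℕ) (a : Fin (n + 1) → ℕ) :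
    Setoid (Fin (n + 1) → K) where
  r x y := ∃ lam : Kˣ, ∀ i, (lam : K) ^ a i * x i = y i
  iseqv := by
    refine ⟨fun x => ⟨1, by simp⟩, ?_, ?_⟩
    · rintro x y ⟨l, h⟩
      refine ⟨l⁻¹, fun i => ?_⟩
      rw [← h i, ← mul_assoc, ← mul_pow]
      simp
    · rintro x y z ⟨l, h⟩ ⟨m, h'⟩
      refine ⟨m * l, fun i => ?_⟩
      rw [← h' i, ← h i, ← mul_assoc, ← mul_pow, Units.val_mul]

/-- The weighted projective space `P(a_0, …, a_n)` over `K` (together with the class of the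
zero vector). -/
def WP (K : Type) [Field K] (n : ℕ) (a : Fin (n + 1) → ℕ) := Quotient (wSetoid K n a)

/-- The weighted projective point attached to a vector. -/
def wcls {K : Type} [Field K] {n : ℕ} (a : Fin (n + 1) → ℕ) (x : Fin (n + 1) → K) :
    WP K n a := Quotient.mk (wSetoid K n a) x

/-- Lift a vector with coordinates in `F` to the algebraic closure. -/
def liftv (F : Type) [Field F] (n : ℕ) (y : Fin (n + 1) → F) :
    Fin (n + 1) → AlgebraicClosure F := fun k => algebraMap F (AlgebraicClosure F) (y k)

/-- The `𝔽_q`-rational points of `P(a_0, …, a_n)`: nonzero classes fixed by the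
`q`-power Frobenius. -/
def RatPts (F : Type) [Field F] [Fintype F] (n : ℕ) (a : Fin (n + 1) → ℕ) :
    Set (WP (AlgebraicClosure F) n a) :=
  {P | (∃ x : Fin (n + 1) → AlgebraicClosure F, x ≠ 0 ∧ wcls a x = P) ∧
    ∀ x : Fin (n + 1) → AlgebraicClosure F, wcls a x = P →
      wcls a (fun k => x k ^ Fintype.card F) = P}

/-- The set of points admitting an `𝔽_q`-rational representative whose `i`-th coordinate is
the prescribed value `c`. -/
def Zset (F : Type) [Field F] [Fintype F] (n : ℕ) (a : Fin (n + 1) → ℕ) (i : Fin (n + 1))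
    (c : F) : Set (WP (AlgebraicClosure F) n a) :=
  {P | ∃ y : Fin (n + 1) → F, y ≠ 0 ∧ y i = c ∧ wcls a (liftv F n y) = P}

/-- The `i`-th coordinate point `O_i = [0 : ⋯ : 0 : 1 : 0 : ⋯ : 0]`. -/
def Oi (F : Type) [Field F] [Fintype F] (n : ℕ) (a : Fin (n + 1) → ℕ) (i : Fin (n + 1)) :
    WP (AlgebraicClosure F) n a := wcls a (liftv F n (Pi.single i 1))

/-- The set `R_i`: rational points with `i`-th coordinate `0`, together with `O_i`. -/
def Rset (F : Type) [Field F] [Fintype F] (n : ℕ) (a : Fin (n + 1) → ℕ) (i : Fin (n + 1)) :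
    Set (WP (AlgebraicClosure F) n a) := Zset F n a i 0 ∪ {Oi F n a i}

/-- The set `T_i`: rational points with a representative having `i`-th coordinate `1`,
excluding `O_i`. -/
def Tset (F : Type) [Field F] [Fintype F] (n : ℕ) (a : Fin (n + 1) → ℕ) (i : Fin (n + 1)) :
    Set (WP (AlgebraicClosure F) n a) := Zset F n a i 1 \ {Oi F n a i}

/-- The set `I_i`: rational points whose `i`-th coordinate (in an `𝔽_q`-rational
representative) is a nonzero non-`a_i`-th power. -/
def Iset (F : Type) [Field F] [Fintype F] (n : ℕ) (a : Fin (n + 1) → ℕ) (i : Fin (n + 1)) :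
    Set (WP (AlgebraicClosure F) n a) :=
  {P | ∃ y : Fin (n + 1) → F, y ≠ 0 ∧ wcls a (liftv F n y) = P ∧ y i ≠ 0 ∧
    ¬ ∃ z : F, z ^ a i = y i}

/-- `F` is weighted homogeneous of degree `d` for the weights `a`: over the algebraic
closure, `F(λ^{a_0}x_0, …, λ^{a_n}x_n) = λ^d F(x_0, …, x_n)`. -/
def WHomog (F : Type) [Field F] [Fintype F] (n : ℕ) (a : Fin (n + 1) → ℕ)
    (Fp : MvPolynomial (Fin (n + 1)) F) (d : ℕ) : Prop :=
  ∀ (lam : AlgebraicClosure F) (x : Fin (n + 1) → AlgebraicClosure F),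
    MvPolynomial.eval (fun k => lam ^ a k * x k)
        (MvPolynomial.map (algebraMap F (AlgebraicClosure F)) Fp)
      = lam ^ d * MvPolynomial.eval x (MvPolynomial.map (algebraMap F (AlgebraicClosure F)) Fp)

/-- The `𝔽_q`-rational points of the hypersurface `V(F)` in `P(a_0, …, a_n)`. -/
def VRat (F : Type) [Field F] [Fintype F] (n : ℕ) (a : Fin (n + 1) → ℕ)
    (Fp : MvPolynomial (Fin (n + 1)) F) : Set (WP (AlgebraicClosure F) n a) :=
  {P | ∃ y : Fin (n + 1) → F, y ≠ 0 ∧ MvPolynomial.eval y Fp = 0 ∧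
    wcls a (liftv F n y) = P}

/-- The `i`-th power map on coordinates. -/
def pimapFun (K : Type) [Field K] (n : ℕ) (a : Fin (n + 1) → ℕ) (i : Fin (n + 1))
    (x : Fin (n + 1) → K) : Fin (n + 1) → K := Function.update x i (x i ^ a i)

/-- The morphism `π_i : P(a_0, …, a_{i-1}, 1, a_{i+1}, …, a_n) → P(a_0, …, a_n)` raising
the `i`-th coordinate to the power `a_i`. -/
def pimap (K : Type) [Field K] (n : ℕ) (a : Fin (n + 1) → ℕ) (i : Fin (n + 1)) :
    WP K n (Function.update a i 1) → WP K n a :=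
  Quotient.lift (fun x => wcls a (pimapFun K n a i x)) (by
    rintro x y ⟨l, h⟩
    refine Quotient.sound ⟨l, fun k => ?_⟩
    rcases eq_or_ne k i with rfl | hk
    · have hi := h k
      rw [Function.update_self] at hi
      simp only [pimapFun, Function.update_self, ← hi, pow_one, mul_pow]
    · have hi := h k
      rw [Function.update_of_ne hk] at hi
      simp only [pimapFun, Function.update_of_ne hk, hi])

/-- The pullback `π_i^* F`, substituting `X_i^{a_i}` for `X_i`. -/
def pistar (F : Type) [Field F] (n : ℕ) (a : Fin (n + 1) → ℕ) (i : Fin (n + 1))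
    (Fp : MvPolynomial (Fin (n + 1)) F) : MvPolynomial (Fin (n + 1)) F :=
  MvPolynomial.bind₁ (fun k => if k = i then X k ^ a i else X k) Fp

/-- The polynomial `F ∘ σ_i^j`, substituting `δ^j X_i` for `X_i`. -/
def sigmaPoly (F : Type) [Field F] (n : ℕ) (i : Fin (n + 1)) (δ : F) (j : ℕ)
    (Fp : MvPolynomial (Fin (n + 1)) F) : MvPolynomial (Fin (n + 1)) F :=
  MvPolynomial.bind₁ (fun k => if k = i then MvPolynomial.C (δ ^ j) * X k else X k) Fp


lemma aux_fixed_mem_range (F : Type) [Field F] [Fintype F] (t : AlgebraicClosure F)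
    (ht : t ^ Fintype.card F = t) : ∃ s : F, algebraMap F (AlgebraicClosure F) s = t := by
  classical
  have K := 0
  set q := Fintype.card F with hqdef
  have hq2 : 1 < q := Fintype.one_lt_card
  set f : Polynomial (AlgebraicClosure F) := Polynomial.X ^ q - Polynomial.X with hf
  have hdeg : f.natDegree = q := by
    rw [hf]
    rw [Polynomial.natDegree_sub_eq_left_of_natDegree_lt] <;>
      simp [Polynomial.natDegree_X_pow, Polynomial.natDegree_X] <;> omega
  have hf0 : f ≠ 0 := by
    intro h
    rw [h, Polynomial.natDegree_zero] at hdeg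
    omega
  set u : Finset (AlgebraicClosure F) := Finset.univ.image (algebraMap F (AlgebraicClosure F)) with hu
  have hucard : u.card = q := by
    rw [hu, Finset.card_image_of_injective _ (algebraMap F (AlgebraicClosure F)).injective, Finset.card_univ]
  have hroot : ∀ x : AlgebraicClosure F, x ^ q = x → x ∈ f.roots.toFinset := by
    intro x hx
    rw [Multiset.mem_toFinset, Polynomial.mem_roots hf0]
    simp [hf, Polynomial.IsRoot, hx]
  have hsub : u ⊆ f.roots.toFinset := by
    intro x hx
    rw [hu, Finset.mem_image] at hx
    obtain ⟨s, -, rfl⟩ := hx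
    apply hroot
    rw [← map_pow, FiniteField.pow_card]
  have hcard2 : f.roots.toFinset.card ≤ q := by
    calc f.roots.toFinset.card ≤ Multiset.card f.roots := Multiset.toFinset_card_le _
    _ ≤ f.natDegree := Polynomial.card_roots' f
    _ = q := hdeg
  have := Finset.eq_of_subset_of_card_le hsub (by omega)
  have htm : t ∈ u := by rw [this]; exact hroot t ht
  rw [hu, Finset.mem_image] at htm
  obtain ⟨s, -, hs⟩ := htm
  exact ⟨s, hs⟩

lemma aux_card_reps (F : Type) [Field F] [Fintype F] (n : ℕ) (a : Fin (n + 1) → ℕ)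
    (ha : ∀ i, 0 < a i) (y0 : Fin (n + 1) → F) (hy00 : y0 ≠ 0) :
    Nat.card {y : Fin (n + 1) → F // y ≠ 0 ∧ wcls a (liftv F n y) = wcls a (liftv F n y0)} =
      Fintype.card F - 1 := by
  classical
  set q := Fintype.card F with hqdef
  set s : Finset (Fin (n + 1)) := Finset.univ.filter (fun i => y0 i ≠ 0) with hsdef
  obtain ⟨i0, hi0⟩ : ∃ i, y0 i ≠ 0 := Function.ne_iff.mp hy00
  have hi0s : i0 ∈ s := by simp [hsdef, hi0]
  have hmem : ∀ i, i ∈ s ↔ y0 i ≠ 0 := fun i => by simp [hsdef]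
  set g : ℕ := s.gcd a with hgdef
  have hg : 0 < g := by
    rcases Nat.eq_zero_or_pos g with h | h
    · exact absurd (Finset.gcd_eq_zero_iff.mp h i0 hi0s) (ha i0).ne'
    · exact h
  set b : Fin (n + 1) → ℕ := fun i => a i / g with hbdef
  have hab : ∀ i ∈ s, g * b i = a i := fun i hi => Nat.mul_div_cancel' (Finset.gcd_dvd hi)
  have hgcdb : s.gcd b = 1 := by
    have h1 : s.gcd (fun i => g * b i) = g := by
      rw [Finset.gcd_congr rfl hab]
    rw [Finset.gcd_mul_left] at h1
    simp only [normalize_eq] at h1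
    exact Nat.eq_of_mul_eq_mul_left hg (h1.trans (mul_one g).symm)
  have key : ∀ t : Fˣ, (fun i => (t : F) ^ b i * y0 i) ≠ 0 ∧
      wcls a (liftv F n (fun i => (t : F) ^ b i * y0 i)) = wcls a (liftv F n y0) := by
    intro t
    constructor
    · intro h
      have h0 := congrFun h i0
      simp only [Pi.zero_apply, mul_eq_zero, pow_eq_zero_iff', Units.ne_zero, false_and,
        false_or] at h0
      exact hi0 h0
    · obtain ⟨lam, hlam⟩ := IsAlgClosed.exists_pow_nat_eq
        (algebraMap F (AlgebraicClosure F) (t : F)) hg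
      have halgt : algebraMap F (AlgebraicClosure F) (t : F) ≠ 0 :=
        (map_ne_zero (algebraMap F (AlgebraicClosure F))).mpr t.ne_zero
      have hlam0 : lam ≠ 0 := by
        intro h
        rw [h, zero_pow hg.ne'] at hlam
        exact halgt hlam.symm
      symm
      apply Quotient.sound
      refine ⟨Units.mk0 lam hlam0, fun i => ?_⟩
      show lam ^ a i * liftv F n y0 i = liftv F n (fun i => (t : F) ^ b i * y0 i) i
      by_cases hi : i ∈ s
      · simp only [liftv, map_mul, map_pow]
        rw [← hab i hi, pow_mul, hlam, ← map_pow]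
      · have : y0 i = 0 := not_not.mp (fun h => hi ((hmem i).mpr h))
        simp [liftv, this]
  have hbij : Function.Bijective (fun t : Fˣ =>
      (⟨fun i => (t : F) ^ b i * y0 i, (key t).1, (key t).2⟩ :
        {y : Fin (n + 1) → F // y ≠ 0 ∧ wcls a (liftv F n y) = wcls a (liftv F n y0)})) := by
    constructor
    · intro t t' h
      have h' : ∀ i, (t : F) ^ b i * y0 i = (t' : F) ^ b i * y0 i := fun i =>
        congrFun (congrArg Subtype.val h) i
      have hb : ∀ i ∈ s, t ^ b i = t' ^ b i := by
        intro i hi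
        have hy : y0 i ≠ 0 := (hmem i).mp hi
        have := mul_right_cancel₀ hy (h' i)
        exact Units.ext (by push_cast; exact this)
      have hdvd : orderOf (t / t') ∣ s.gcd b :=
        Finset.dvd_gcd fun i hi =>
          orderOf_dvd_of_pow_eq_one (by rw [div_pow, hb i hi, div_self'])
      rw [hgcdb, Nat.dvd_one, orderOf_eq_one_iff] at hdvd
      exact div_eq_one.mp hdvd
    · rintro ⟨y, hy0, hcls⟩
      obtain ⟨lam, hlam⟩ := Quotient.exact hcls.symm
      have hord : ∀ i ∈ s, ((lam : AlgebraicClosure F)) ^ (a i * (q - 1)) = 1 := by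
        intro i hi
        have hy0i : y0 i ≠ 0 := (hmem i).mp hi
        have hyi : y i ≠ 0 := by
          intro h
          have h2 := hlam i
          simp only [liftv, h, map_zero, mul_eq_zero] at h2
          rcases h2 with h' | h'
          · exact (pow_ne_zero _ lam.ne_zero) h'
          · exact hy0i ((map_eq_zero _).mp h')
        have hc : (lam : AlgebraicClosure F) ^ a i
            = algebraMap F (AlgebraicClosure F) (y i / y0 i) := by
          rw [map_div₀]
          rw [eq_div_iff ((map_ne_zero _).mpr hy0i)]
          exact hlam i
        rw [pow_mul, hc, ← map_pow,
          FiniteField.pow_card_sub_one_eq_one _ (div_ne_zero hyi hy0i), map_one]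
      have horder : ((lam : AlgebraicClosure F)) ^ (g * (q - 1)) = 1 := by
        have hdvd : orderOf ((lam : AlgebraicClosure F)) ∣ s.gcd (fun i => a i * (q - 1)) :=
          Finset.dvd_gcd fun i hi => orderOf_dvd_of_pow_eq_one (hord i hi)
        rw [Finset.gcd_mul_right, normalize_eq] at hdvd
        exact orderOf_dvd_iff_pow_eq_one.mp hdvd
      have hq1 : 1 ≤ q := Fintype.card_pos
      have ht'q : ((lam : AlgebraicClosure F) ^ g) ^ q = (lam : AlgebraicClosure F) ^ g := by
        have e1 : ((lam : AlgebraicClosure F) ^ g) ^ q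
            = ((lam : AlgebraicClosure F) ^ g) ^ (q - 1) * (lam : AlgebraicClosure F) ^ g := by
          rw [← pow_succ]
          congr 1
          omega
        rw [e1, ← pow_mul, horder, one_mul]
      obtain ⟨sF, hsF⟩ := aux_fixed_mem_range F _ ht'q
      have hsF0 : sF ≠ 0 := by
        intro h
        rw [h, map_zero] at hsF
        exact (pow_ne_zero g lam.ne_zero) hsF.symm
      refine ⟨Units.mk0 sF hsF0, Subtype.ext (funext fun i => ?_)⟩
      show sF ^ b i * y0 i = y i
      by_cases hi : i ∈ s
      · apply (algebraMap F (AlgebraicClosure F)).injective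
        rw [map_mul, map_pow, hsF, ← pow_mul, hab i hi]
        exact hlam i
      · have hz : y0 i = 0 := not_not.mp (fun h => hi ((hmem i).mpr h))
        have h2 := hlam i
        simp only [liftv, hz, map_zero, mul_zero] at h2
        rw [hz, mul_zero]
        exact ((map_eq_zero _).mp h2.symm).symm
  rw [← Nat.card_eq_of_bijective _ hbij, Nat.card_eq_fintype_card, Fintype.card_units]

lemma aux_mem_ratpts (F : Type) [Field F] [Fintype F] (n : ℕ) (a : Fin (n + 1) → ℕ)
    (y : Fin (n + 1) → F) (hy : y ≠ 0) : wcls a (liftv F n y) ∈ RatPts F n a := by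
  constructor
  · refine ⟨liftv F n y, ?_, rfl⟩
    intro h
    apply hy
    funext k
    have := congrFun h k
    simpa [liftv] using this
  · intro x hx
    obtain ⟨l, hl⟩ := Quotient.exact hx
    apply Quotient.sound
    refine ⟨l ^ Fintype.card F, fun k => ?_⟩
    simp only [Units.val_pow_eq_pow_val]
    show ((l : AlgebraicClosure F) ^ Fintype.card F) ^ a k * x k ^ Fintype.card F
      = liftv F n y k
    rw [← pow_mul, mul_comm (Fintype.card F), pow_mul, ← mul_pow, hl k]
    show (algebraMap F (AlgebraicClosure F) (y k)) ^ Fintype.card F = liftv F n y k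
    rw [← map_pow, FiniteField.pow_card]
    rfl

lemma aux_exists_rep (F : Type) [Field F] [Fintype F] (n : ℕ) (a : Fin (n + 1) → ℕ)
    {P : WP (AlgebraicClosure F) n a} (hP : P ∈ RatPts F n a) :
    ∃ y0 : Fin (n + 1) → F, y0 ≠ 0 ∧ wcls a (liftv F n y0) = P := by
  obtain ⟨⟨x, hx0, hxP⟩, hFrob⟩ := hP
  have hq1 : 1 ≤ Fintype.card F := Fintype.card_pos
  have hx := hFrob x hxP
  rw [← hxP] at hx
  obtain ⟨lam, hlam⟩ := Quotient.exact hx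
  obtain ⟨ν, hν⟩ := IsAlgClosed.exists_pow_nat_eq ((lam : AlgebraicClosure F))
    (n := Fintype.card F - 1) (by
      have := Fintype.one_lt_card (α := F)
      omega)
  have hν0 : ν ≠ 0 := by
    intro h
    rw [h, zero_pow (by have := Fintype.one_lt_card (α := F); omega)] at hν
    exact lam.ne_zero hν.symm
  have hfix : ∀ k, (ν ^ a k * x k) ^ Fintype.card F = ν ^ a k * x k := by
    intro k
    have h1 : (ν : AlgebraicClosure F) ^ ((Fintype.card F - 1) * a k) * x k ^ Fintype.card F
        = x k := by
      rw [pow_mul, hν]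
      exact hlam k
    calc (ν ^ a k * x k) ^ Fintype.card F
        = ν ^ (a k * Fintype.card F) * x k ^ Fintype.card F := by
          rw [mul_pow, ← pow_mul]
      _ = ν ^ a k * (ν ^ ((Fintype.card F - 1) * a k) * x k ^ Fintype.card F) := by
          rw [← mul_assoc, ← pow_add]
          congr 1
          obtain ⟨c, hc⟩ : ∃ c, Fintype.card F = c + 1 := ⟨Fintype.card F - 1, by omega⟩
          rw [hc, Nat.add_sub_cancel]
          ring
      _ = ν ^ a k * x k := by rw [h1]
  choose y0 hy0 using fun k => aux_fixed_mem_range F _ (hfix k)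
  refine ⟨y0, ?_, ?_⟩
  · intro h
    apply hx0
    funext k
    simp only [Pi.zero_apply]
    have hk := hy0 k
    rw [congrFun h k] at hk
    simp only [Pi.zero_apply, map_zero] at hk
    rcases mul_eq_zero.mp hk.symm with h' | h'
    · exact absurd h' (pow_ne_zero _ hν0)
    · exact h'
  · rw [← hxP]
    symm
    apply Quotient.sound
    refine ⟨Units.mk0 ν hν0, fun k => ?_⟩
    show ν ^ a k * x k = liftv F n y0 k
    exact (hy0 k).symm

/-- Every `𝔽_q`-rational point of `P(a_0, …, a_n)` has exactly `q - 1` representatives in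
`𝔽_q^{n+1} ∖ {0}`; consequently the number of `𝔽_q`-rational points is
`p_n = qⁿ + ⋯ + q + 1`. -/
theorem stmt7 (F : Type) [Field F] [Fintype F] (q n : ℕ) (hq : Fintype.card F = q)
    (a : Fin (n + 1) → ℕ) (ha : ∀ i, 0 < a i) :
    (∀ P ∈ RatPts F n a,
      Nat.card {y : Fin (n + 1) → F // y ≠ 0 ∧ wcls a (liftv F n y) = P} = q - 1) ∧
    Nat.card (RatPts F n a) = ∑ k ∈ Finset.range (n + 1), q ^ k := by
  classical
  subst hq
  have hrep : ∀ P ∈ RatPts F n a,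
      Nat.card {y : Fin (n + 1) → F // y ≠ 0 ∧ wcls a (liftv F n y) = P}
        = Fintype.card F - 1 := by
    intro P hP
    obtain ⟨y0, hy00, rfl⟩ := aux_exists_rep F n a hP
    exact aux_card_reps F n a ha y0 hy00
  refine ⟨hrep, ?_⟩
  set q := Fintype.card F with hqdef
  have hq2 : 1 < q := Fintype.one_lt_card
  let f : {y : Fin (n + 1) → F // y ≠ 0} → (RatPts F n a) := fun y =>
    ⟨wcls a (liftv F n y.1), aux_mem_ratpts F n a y.1 y.2⟩
  have hsurj : Function.Surjective f := by
    rintro ⟨P, hP⟩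
    obtain ⟨y0, hy00, hcls⟩ := aux_exists_rep F n a hP
    exact ⟨⟨y0, hy00⟩, Subtype.ext hcls⟩
  haveI : Finite (RatPts F n a) := Finite.of_surjective f hsurj
  haveI : Fintype (RatPts F n a) := Fintype.ofFinite _
  have hcardD : Fintype.card {y : Fin (n + 1) → F // y ≠ 0} = q ^ (n + 1) - 1 := by
    have h1 : Fintype.card {y : Fin (n + 1) → F // ¬(y = 0)}
        = Fintype.card (Fin (n + 1) → F) - Fintype.card {y : Fin (n + 1) → F // y = 0} :=
      Fintype.card_subtype_compl _
    rw [h1, Fintype.card_subtype_eq, Fintype.card_fun, Fintype.card_fin]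
  have hfib : ∀ P : RatPts F n a,
      Fintype.card {y : {y : Fin (n + 1) → F // y ≠ 0} // f y = P} = q - 1 := by
    intro P
    have e : {y : {y : Fin (n + 1) → F // y ≠ 0} // f y = P}
        ≃ {y : Fin (n + 1) → F // y ≠ 0 ∧ wcls a (liftv F n y) = P.1} :=
      { toFun := fun z => ⟨z.1.1, z.1.2, congrArg Subtype.val z.2⟩
        invFun := fun w => ⟨⟨w.1, w.2.1⟩, Subtype.ext w.2.2⟩
        left_inv := fun z => rfl
        right_inv := fun w => rfl }
    rw [Fintype.card_congr e, ← Nat.card_eq_fintype_card]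
    exact hrep P.1 P.2
  have hDcount : Fintype.card {y : Fin (n + 1) → F // y ≠ 0}
      = Fintype.card (RatPts F n a) * (q - 1) := by
    rw [← Fintype.card_congr (Equiv.sigmaFiberEquiv f), Fintype.card_sigma]
    simp only [hfib, Finset.sum_const, Finset.card_univ, smul_eq_mul]
  have hq1 : 1 ≤ q := by omega
  have hqp : 1 ≤ q ^ (n + 1) := Nat.one_le_pow _ _ (by omega)
  have hgeom : (∑ k ∈ Finset.range (n + 1), q ^ k) * (q - 1) = q ^ (n + 1) - 1 := by
    have hcast := geom_sum_mul (q : ℤ) (n + 1)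
    apply Nat.cast_injective (R := ℤ)
    push_cast [Nat.cast_sub hq1, Nat.cast_sub hqp]
    exact hcast
  rw [Nat.card_eq_fintype_card]
  apply Nat.eq_of_mul_eq_mul_right (show 0 < q - 1 by omega)
  rw [hgeom, ← hDcount, hcardD]

end
end

section
/- Fix i ∈ {0,...,n}, let r_i = gcd(a_i, q-1), and let δ be a generator of F_q^*. For j ∈ {1,...,q-1} define Z_i(j) as the set of F_q-rational points of P(a_0,...,a_n) having a representative whose i-th coordinate equals δ^j. Then Z_i(j_1) = Z_i(j_2) whenever j_1 ≡ j_2 (mod r_i). -/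
noncomputable section

open MvPolynomial

/-- If `r = gcd(a_i, q-1)` divides `m`, then `δ^m` is an `a_i`-th power in `Fˣ`. -/
lemma exists_pow_eq_zpow (F : Type) [Field F] [Fintype F] (q : ℕ)
    (hq : Fintype.card F = q) (ai : ℕ) (δ : Fˣ) (r : ℕ)
    (hr : r = Nat.gcd ai (q - 1)) (m : ℤ) (hm : (r : ℤ) ∣ m) :
    ∃ μ : Fˣ, μ ^ ai = δ ^ m := by
  obtain ⟨t, rfl⟩ := hm
  have hδq : δ ^ ((q - 1 : ℕ) : ℤ) = 1 := by
    rw [zpow_natCast]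
    ext
    push_cast
    rw [← hq]
    exact FiniteField.pow_card_sub_one_eq_one (δ : F) δ.ne_zero
  have hbez : (r : ℤ) = ai * Nat.gcdA ai (q - 1) + (q - 1 : ℕ) * Nat.gcdB ai (q - 1) := by
    rw [hr]; exact Nat.gcd_eq_gcd_ab ai (q - 1)
  refine ⟨δ ^ (Nat.gcdA ai (q - 1) * t), ?_⟩
  rw [← zpow_natCast (δ ^ (Nat.gcdA ai (q - 1) * t)) ai, ← zpow_mul]
  have key : (r : ℤ) * t = ai * (Nat.gcdA ai (q - 1) * t) + ((q - 1 : ℕ) : ℤ) * (Nat.gcdB ai (q - 1) * t) := by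
    rw [hbez]; ring
  have h1 : δ ^ ((r : ℤ) * t) = δ ^ ((ai : ℤ) * (Nat.gcdA ai (q - 1) * t)) := by
    rw [key, zpow_add, zpow_mul δ ((q - 1 : ℕ) : ℤ), hδq, one_zpow, mul_one]
  rw [h1]
  congr 1
  ring

lemma Zset_subset (F : Type) [Field F] [Fintype F] (q n : ℕ) (hq : Fintype.card F = q)
    (a : Fin (n + 1) → ℕ) (i : Fin (n + 1)) (δ : Fˣ)
    (r : ℕ) (hr : r = Nat.gcd (a i) (q - 1))
    (j₁ j₂ : ℕ) (hcong : j₁ ≡ j₂ [MOD r]) :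
    Zset F n a i ((δ : F) ^ j₁) ⊆ Zset F n a i ((δ : F) ^ j₂) := by
  have hdvd : (r : ℤ) ∣ (j₂ : ℤ) - (j₁ : ℤ) := Nat.ModEq.dvd hcong
  obtain ⟨μ, hμ⟩ := exists_pow_eq_zpow F q hq (a i) δ r hr _ hdvd
  intro P hPmem
  simp only [Zset, Set.mem_setOf_eq] at hPmem ⊢
  obtain ⟨y, hy0, hyi, hP⟩ := hPmem
  refine ⟨fun k => (μ : F) ^ a k * y k, ?_, ?_, ?_⟩
  · intro h
    apply hy0
    funext k
    have := congrFun h k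
    simp only [Pi.zero_apply] at this ⊢
    exact (mul_eq_zero.mp this).resolve_left (pow_ne_zero _ μ.ne_zero)
  · have huc : ((μ ^ a i : Fˣ) : F) * (δ : F) ^ j₁ = (δ : F) ^ j₂ := by
      have : (μ ^ a i) * δ ^ (j₁ : ℤ) = δ ^ (j₂ : ℤ) := by
        rw [hμ, ← zpow_add]; congr 1; ring
      have := congrArg (Units.val) this
      simpa [Units.val_zpow_eq_zpow_val, zpow_natCast] using this
    simpa [hyi] using huc
  · rw [← hP]
    have hrel : (wSetoid (AlgebraicClosure F) n a).r (liftv F n y)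
        (liftv F n fun k => (μ : F) ^ a k * y k) :=
      ⟨(Units.map (algebraMap F (AlgebraicClosure F) : F →* _)) μ, fun k => by
        simp only [liftv, Units.coe_map, MonoidHom.coe_coe, map_mul, map_pow]⟩
    exact (Quotient.sound hrel).symm

/-- `Z_i(j₁) = Z_i(j₂)` whenever `j₁ ≡ j₂ (mod r_i)`, where `r_i = gcd (a_i, q - 1)` and
`Z_i(j)` is the set of rational points with a representative having `i`-th coordinate
`δ^j`, `δ` a generator of `𝔽_qˣ`. -/
theorem stmt8 (F : Type) [Field F] [Fintype F] (q n : ℕ) (hq : Fintype.card F = q)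
    (a : Fin (n + 1) → ℕ) (ha : ∀ i, 0 < a i) (i : Fin (n + 1))
    (δ : Fˣ) (hδ : ∀ z : Fˣ, z ∈ Subgroup.zpowers δ)
    (r : ℕ) (hr : r = Nat.gcd (a i) (q - 1))
    (j₁ j₂ : ℕ) (hj₁ : 1 ≤ j₁ ∧ j₁ ≤ q - 1) (hj₂ : 1 ≤ j₂ ∧ j₂ ≤ q - 1)
    (hcong : j₁ ≡ j₂ [MOD r]) :
    Zset F n a i ((δ : F) ^ j₁) = Zset F n a i ((δ : F) ^ j₂) :=
  Set.Subset.antisymm (Zset_subset F q n hq a i δ r hr j₁ j₂ hcong)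
    (Zset_subset F q n hq a i δ r hr j₂ j₁ hcong.symm)

end
end

section
/- Let F be a weighted homogeneous polynomial over F_q of weighted degree d for weights (a_0,...,a_n), δ a generator of F_q^*, σ_i the automorphism of P(a_0,...,a_n) multiplying the i-th coordinate by δ, r_i = gcd(a_i, q-1), and π_i^*G(X) = G(X_0,...,X_i^{a_i},...,X_n). Then the number N(F) of F_q-points of the hypersurface V(F) in P(a_0,...,a_n) satisfies N(F) ≤ (1/r_i) Σ_{j=0}^{r_i-1} N(π_i^*(F ∘ σ_i^j)), where N(π_i^*(F∘σ_i^j)) counts F_q-points of the corresponding hypersurface in P(a_0,...,a_{i-1},1,a_{i+1},...,a_n). -/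
noncomputable section

open MvPolynomial

private lemma gcd_pow_mem {G : Type*} [Group G] {ι : Type*} (H : Subgroup G) (μ : G)
    (S : Finset ι) (b : ι → ℕ) (h : ∀ k ∈ S, μ ^ b k ∈ H) : μ ^ S.gcd b ∈ H := by
  classical
  induction S using Finset.induction_on with
  | empty => simpa using H.one_mem
  | @insert c S hc ih =>
    rw [Finset.gcd_insert]
    have hs : μ ^ b c ∈ H := h _ (Finset.mem_insert_self _ _)
    have ht : μ ^ S.gcd b ∈ H := ih fun k hk => h _ (Finset.mem_insert_of_mem hk)
    have h2 : μ ^ ((Nat.gcd (b c) (S.gcd b) : ℤ)) ∈ H := by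
      rw [Nat.gcd_eq_gcd_ab, zpow_add, zpow_mul, zpow_mul]
      exact H.mul_mem (H.zpow_mem (by simpa using hs) _) (H.zpow_mem (by simpa using ht) _)
    have h3 : μ ^ (Nat.gcd (b c) (S.gcd b)) ∈ H := by
      have := zpow_natCast μ (Nat.gcd (b c) (S.gcd b))
      rw [← this]; exact h2
    exact h3

private lemma gcd_pow_eq_one {G : Type*} [CommGroup G] {ι : Type*} (μ : G)
    (S : Finset ι) (b : ι → ℕ) (h : ∀ k ∈ S, μ ^ b k = 1) : μ ^ S.gcd b = 1 := by
  have := gcd_pow_mem (⊥ : Subgroup G) μ S b (by simpa [Subgroup.mem_bot] using h)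
  simpa [Subgroup.mem_bot] using this

private lemma my_eval_bind₁ {F : Type} [CommSemiring F] {σ τ : Type} (g : τ → F)
    (h : σ → MvPolynomial τ F) (φ : MvPolynomial σ F) :
    eval g (bind₁ h φ) = eval (fun i => eval g (h i)) φ :=
  eval₂Hom_bind₁ (RingHom.id F) g h φ

private lemma exists_W {F : Type} [Field F] [Fintype F] (δ : Fˣ)
    (hδ : ∀ z : Fˣ, z ∈ Subgroup.zpowers δ) (m : ℕ) (hm : m = Fintype.card F - 1)
    (ai r : ℕ) (hai : 0 < ai) (hr : r = Nat.gcd ai m) (c : Fˣ) :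
    ∃ j : ℕ, j < r ∧ ∃ W : ℕ → Fˣ, (∀ t t', t < r → t' < r → W t = W t' → t = t') ∧
      ∀ t, δ ^ j * (W t) ^ ai = c := by
  classical
  have hm0 : 0 < m := by
    have : 1 < Fintype.card F := Fintype.one_lt_card
    omega
  have hcardU : Fintype.card Fˣ = m := by rw [Fintype.card_units, hm]
  have hord : orderOf δ = m := by
    rw [orderOf_eq_card_of_forall_mem_zpowers hδ, Nat.card_eq_fintype_card, hcardU]
  have hδm : δ ^ m = 1 := by rw [← hord]; exact pow_orderOf_eq_one δ
  have hmZ : δ ^ ((m : ℤ)) = 1 := by rw [zpow_natCast, hδm]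
  have hr0 : 0 < r := by
    rw [hr]
    exact Nat.gcd_pos_of_pos_left m hai
  have hrai : r ∣ ai := hr ▸ Nat.gcd_dvd_left _ _
  have hrm : r ∣ m := hr ▸ Nat.gcd_dvd_right _ _
  obtain ⟨k, hk⟩ := Subgroup.mem_zpowers_iff.mp (hδ c)
  set s : ℕ := (k % (m : ℤ)).toNat with hsdef
  have hsk : ((s : ℤ)) = k % (m : ℤ) := Int.toNat_of_nonneg (Int.emod_nonneg k (by exact_mod_cast hm0.ne'))
  have hs : δ ^ s = c := by
    have h1 : δ ^ (k % (m : ℤ)) = δ ^ k := by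
      conv_rhs => rw [← Int.emod_add_mul_ediv k (m : ℤ)]
      rw [zpow_add, zpow_mul, hmZ, one_zpow, mul_one]
    rw [← hk, ← h1, ← hsk, zpow_natCast]
  set A := Nat.gcdA ai m with hA
  set B := Nat.gcdB ai m with hB
  have hgcdab : (r : ℤ) = ai * A + m * B := by rw [hr]; exact Nat.gcd_eq_gcd_ab ai m
  refine ⟨s % r, Nat.mod_lt _ hr0, fun t => δ ^ (A * ((s / r : ℕ) : ℤ)) * δ ^ (t * (m / r)), ?_, ?_⟩
  · intro t t' ht ht' hW
    have h1 : δ ^ (t * (m / r)) = δ ^ (t' * (m / r)) := mul_left_cancel hW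
    have h2 : t * (m / r) ≡ t' * (m / r) [MOD m] := by
      have := pow_eq_pow_iff_modEq.mp h1
      rwa [hord] at this
    have hmr0 : m / r ≠ 0 := by
      have h4 : r ≤ m := Nat.le_of_dvd hm0 hrm
      have := Nat.div_pos h4 hr0
      omega
    have hm' : r * (m / r) = m := Nat.mul_div_cancel' hrm
    have h2' : t * (m / r) ≡ t' * (m / r) [MOD r * (m / r)] := by rw [hm']; exact h2
    have h3 : t ≡ t' [MOD r] := Nat.ModEq.mul_right_cancel' hmr0 h2'
    have h4 : t % r = t' % r := h3
    calc t = t % r := (Nat.mod_eq_of_lt ht).symm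
      _ = t' % r := h4
      _ = t' := Nat.mod_eq_of_lt ht'
  · intro t
    have e1 : (δ ^ (t * (m / r))) ^ ai = 1 := by
      rw [← pow_mul]
      have hexp : t * (m / r) * ai = m * (t * (ai / r)) := by
        have h1 : m / r * ai = ai / r * m := by
          calc m / r * ai = m / r * (ai / r * r) := by rw [Nat.div_mul_cancel hrai]
            _ = m / r * r * (ai / r) := by ring
            _ = m * (ai / r) := by rw [Nat.div_mul_cancel hrm]
            _ = ai / r * m := by ring
        calc t * (m / r) * ai = t * (m / r * ai) := by ring
          _ = t * (ai / r * m) := by rw [h1]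
          _ = m * (t * (ai / r)) := by ring
      rw [hexp, pow_mul, hδm, one_pow]
    have hsrz : (r : ℤ) * ((s / r : ℕ) : ℤ) = (s : ℤ) - ((s % r : ℕ) : ℤ) := by
      have h := Nat.mod_add_div s r
      have h2 : ((s % r : ℕ) : ℤ) + (r : ℤ) * ((s / r : ℕ) : ℤ) = (s : ℤ) := by
        exact_mod_cast h
      linarith
    have e2 : (δ ^ (A * ((s / r : ℕ) : ℤ))) ^ ai
        = δ ^ ((s : ℤ) - ((s % r : ℕ) : ℤ) - (m : ℤ) * (B * ((s / r : ℕ) : ℤ))) := by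
      rw [← zpow_natCast (δ ^ (A * ((s / r : ℕ) : ℤ))) ai, ← zpow_mul]
      congr 1
      linear_combination (-((s / r : ℕ) : ℤ)) * hgcdab + hsrz
    calc δ ^ (s % r) * (δ ^ (A * ((s / r : ℕ) : ℤ)) * δ ^ (t * (m / r))) ^ ai
        = δ ^ (s % r) * ((δ ^ (A * ((s / r : ℕ) : ℤ))) ^ ai * (δ ^ (t * (m / r))) ^ ai) := by
          rw [mul_pow]
      _ = δ ^ (((s % r : ℕ) : ℤ)) * δ ^ ((s : ℤ) - ((s % r : ℕ) : ℤ) - (m : ℤ) * (B * ((s / r : ℕ) : ℤ))) := by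
          rw [e1, e2, mul_one, zpow_natCast]
      _ = δ ^ ((s : ℤ) + (m : ℤ) * (-(B * ((s / r : ℕ) : ℤ)))) := by
          rw [← zpow_add]; congr 1; ring
      _ = δ ^ ((s : ℤ)) * (δ ^ ((m : ℤ))) ^ (-(B * ((s / r : ℕ) : ℤ))) := by
          rw [zpow_add, zpow_mul]
      _ = c := by rw [hmZ, one_zpow, mul_one, zpow_natCast, hs]
section MyAux
open Finset
variable {F : Type} [Field F] [Fintype F] {n : ℕ}

private lemma eval_lift (y : Fin (n + 1) → F) (p : MvPolynomial (Fin (n + 1)) F) :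
    MvPolynomial.eval (liftv F n y) (MvPolynomial.map (algebraMap F (AlgebraicClosure F)) p)
      = algebraMap F (AlgebraicClosure F) (MvPolynomial.eval y p) := by
  induction p using MvPolynomial.induction_on with
  | C a => simp
  | add p q hp hq => simp [hp, hq]
  | mul_X p k hp => simp [hp, liftv]

private lemma eval_pistar_sigma (a : Fin (n + 1) → ℕ) (i : Fin (n + 1)) (dl : F) (j : ℕ)
    (Fp : MvPolynomial (Fin (n + 1)) F) (z : Fin (n + 1) → F) :
    MvPolynomial.eval z (pistar F n a i (sigmaPoly F n i dl j Fp))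
      = MvPolynomial.eval (Function.update z i (dl ^ j * z i ^ a i)) Fp := by
  unfold pistar sigmaPoly
  rw [my_eval_bind₁, my_eval_bind₁]
  have hfun : (fun k => MvPolynomial.eval
        (fun k' => MvPolynomial.eval z (if k' = i then (MvPolynomial.X k' : MvPolynomial (Fin (n+1)) F) ^ a i else MvPolynomial.X k'))
        (if k = i then MvPolynomial.C (dl ^ j) * MvPolynomial.X k else MvPolynomial.X k))
      = Function.update z i (dl ^ j * z i ^ a i) := by
    funext k
    rcases eq_or_ne k i with rfl | hk
    · simp [Function.update_self]
    · simp [hk, Function.update_of_ne hk]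
  rw [hfun]

private lemma eval_zero_of_unit_rel (a : Fin (n + 1) → ℕ) (d : ℕ)
    (Fp : MvPolynomial (Fin (n + 1)) F) (hF : WHomog F n a Fp d)
    (y w : Fin (n + 1) → F) (hy : MvPolynomial.eval y Fp = 0) (lam : (AlgebraicClosure F)ˣ)
    (h : ∀ k, (lam : AlgebraicClosure F) ^ a k * algebraMap F (AlgebraicClosure F) (y k)
        = algebraMap F (AlgebraicClosure F) (w k)) :
    MvPolynomial.eval w Fp = 0 := by
  have h1 := hF (lam : AlgebraicClosure F) (liftv F n y)
  have h2 : (fun k => (lam : AlgebraicClosure F) ^ a k * liftv F n y k) = liftv F n w :=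
    funext fun k => h k
  rw [h2] at h1
  rw [eval_lift, eval_lift, hy, map_zero, mul_zero] at h1
  exact (algebraMap F (AlgebraicClosure F)).injective (by simpa using h1)

end MyAux

/-- `r_i · N(F) ≤ ∑_{j=0}^{r_i - 1} N(π_i^*(F ∘ σ_i^j))`, i.e.
`N(F) ≤ (1/r_i) ∑_j N(π_i^*(F ∘ σ_i^j))`. -/
theorem stmt13 (F : Type) [Field F] [Fintype F] (q n d : ℕ) (hq : Fintype.card F = q)
    (a : Fin (n + 1) → ℕ) (ha : ∀ i, 0 < a i) (i : Fin (n + 1))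
    (δ : Fˣ) (hδ : ∀ z : Fˣ, z ∈ Subgroup.zpowers δ)
    (r : ℕ) (hr : r = Nat.gcd (a i) (q - 1))
    (Fp : MvPolynomial (Fin (n + 1)) F) (hF : WHomog F n a Fp d) :
    r * Nat.card (VRat F n a Fp) ≤
      ∑ j ∈ Finset.range r,
        Nat.card (VRat F n (Function.update a i 1)
          (pistar F n a i (sigmaPoly F n i (δ : F) j Fp))) := by
  classical
  have hφ : Function.Injective (algebraMap F (AlgebraicClosure F)) :=
    (algebraMap F (AlgebraicClosure F)).injective
  have hq2 : 2 ≤ q := by rw [← hq]; exact Fintype.one_lt_card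
  have hm0 : 0 < q - 1 := by omega
  have hcardU : Nat.card Fˣ = q - 1 := by
    rw [Nat.card_eq_fintype_card, Fintype.card_units, hq]
  -- solution sets
  set Sol : Set (Fin (n + 1) → F) := {y | y ≠ 0 ∧ MvPolynomial.eval y Fp = 0} with hSolDef
  set SolJ : ℕ → Set (Fin (n + 1) → F) := fun j =>
    {z | z ≠ 0 ∧ MvPolynomial.eval z (pistar F n a i (sigmaPoly F n i (δ : F) j Fp)) = 0}
    with hSolJDef
  -- finiteness of rational point sets
  have hVfin : ∀ (b : Fin (n + 1) → ℕ) (H : MvPolynomial (Fin (n + 1)) F),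
      Finite ↥(VRat F n b H) := by
    intro b H
    have hx : ∀ P : ↥(VRat F n b H), ∃ y : Fin (n + 1) → F,
        y ≠ 0 ∧ MvPolynomial.eval y H = 0 ∧ wcls b (liftv F n y) = ↑P := fun P => P.2
    choose f h1 h2 h3 using hx
    exact Finite.of_injective f fun P Q hPQ => Subtype.ext (by rw [← h3 P, ← h3 Q, hPQ])
  -- the range subgroup lemma
  have hrange : ∀ (b : Fin (n + 1) → ℕ) (y w : Fin (n + 1) → F)
      (lam : (AlgebraicClosure F)ˣ),
      (∀ k, (lam : AlgebraicClosure F) ^ b k * algebraMap F (AlgebraicClosure F) (y k)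
          = algebraMap F (AlgebraicClosure F) (w k)) →
      ∃ u : Fˣ, algebraMap F (AlgebraicClosure F) (u : F)
          = (lam : AlgebraicClosure F) ^ ((Finset.univ.filter fun k => y k ≠ 0).gcd b) := by
    intro b y w lam hrel
    have hmem : ∀ k ∈ Finset.univ.filter (fun k => y k ≠ 0),
        lam ^ b k ∈ (Units.map (algebraMap F (AlgebraicClosure F)).toMonoidHom).range := by
      intro k hk
      rw [Finset.mem_filter] at hk
      have hyk : y k ≠ 0 := hk.2
      have hy' : algebraMap F (AlgebraicClosure F) (y k) ≠ 0 :=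
        (map_ne_zero_iff _ hφ).mpr hyk
      have hwk : w k ≠ 0 := by
        intro h0
        have h1 := hrel k
        rw [h0, map_zero] at h1
        exact (mul_ne_zero ((lam ^ b k).ne_zero) hy') h1
      refine ⟨Units.mk0 (w k) hwk * (Units.mk0 (y k) hyk)⁻¹, ?_⟩
      apply Units.ext
      have : ((Units.map (algebraMap F (AlgebraicClosure F)).toMonoidHom)
          (Units.mk0 (w k) hwk * (Units.mk0 (y k) hyk)⁻¹) : AlgebraicClosure F)
          = algebraMap F (AlgebraicClosure F) (w k)
            * (algebraMap F (AlgebraicClosure F) (y k))⁻¹ := by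
        simp [Units.coe_map]
      rw [this]
      rw [Units.val_pow_eq_pow_val]
      rw [eq_comm, eq_mul_inv_iff_mul_eq₀ hy']
      exact hrel k
    obtain ⟨u, hu⟩ := gcd_pow_mem _ lam _ b hmem
    refine ⟨u, ?_⟩
    have := congrArg (Units.val) hu
    simpa [Units.coe_map] using this
  -- equality of gcd-powers of two scaling units
  have hgpow : ∀ (b : Fin (n + 1) → ℕ) (y : Fin (n + 1) → F)
      (lam lam' : (AlgebraicClosure F)ˣ),
      (∀ k, y k ≠ 0 → lam ^ b k = lam' ^ b k) →
      lam ^ ((Finset.univ.filter fun k => y k ≠ 0).gcd b)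
        = lam' ^ ((Finset.univ.filter fun k => y k ≠ 0).gcd b) := by
    intro b y lam lam' hb
    have h1 : ∀ k ∈ Finset.univ.filter (fun k => y k ≠ 0), (lam'⁻¹ * lam) ^ b k = 1 := by
      intro k hk
      rw [Finset.mem_filter] at hk
      rw [mul_pow, hb k hk.2, ← mul_pow, inv_mul_cancel, one_pow]
    have h2 := gcd_pow_eq_one (lam'⁻¹ * lam) _ b h1
    rw [mul_pow, inv_pow] at h2
    exact (inv_mul_eq_one.mp h2).symm

  -- gcd of weights over the support of a vector
  set gb : (Fin (n + 1) → ℕ) → (Fin (n + 1) → F) → ℕ :=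
    fun b y => (Finset.univ.filter fun k => y k ≠ 0).gcd b with hgbdef
  -- Step 1 preliminaries
  haveI hfinV := hVfin a Fp
  have hx1 : ∀ P : ↥(VRat F n a Fp), ∃ y : Fin (n + 1) → F,
      y ≠ 0 ∧ MvPolynomial.eval y Fp = 0 ∧ wcls a (liftv F n y) = ↑P := fun P => P.2
  choose yP hy0 hyev hycls using hx1
  have hsupp : ∀ P : ↥(VRat F n a Fp), ∃ k, yP P k ≠ 0 := by
    intro P
    obtain ⟨k, hk⟩ := Function.ne_iff.mp (hy0 P)
    exact ⟨k, by simpa using hk⟩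
  have hscale : ∀ (P : ↥(VRat F n a Fp)) (u : Fˣ), ∃ lam : (AlgebraicClosure F)ˣ,
      (∀ k, (lam : AlgebraicClosure F) ^ a k * algebraMap F (AlgebraicClosure F) (yP P k)
          = algebraMap F (AlgebraicClosure F) ((u : F) ^ (a k / gb a (yP P)) * yP P k))
      ∧ (lam : AlgebraicClosure F) ^ (gb a (yP P))
          = algebraMap F (AlgebraicClosure F) (u : F) := by
    intro P u
    have hgne : gb a (yP P) ≠ 0 := by
      intro h0
      obtain ⟨k, hk⟩ := hsupp P
      have := Finset.gcd_eq_zero_iff.mp h0 k (by simp [hk])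
      exact (ha k).ne' this
    have hu0 : algebraMap F (AlgebraicClosure F) (u : F) ≠ 0 :=
      (map_ne_zero_iff _ hφ).mpr (Units.ne_zero u)
    obtain ⟨lam0, hlam0⟩ := IsAlgClosed.exists_pow_nat_eq
      (algebraMap F (AlgebraicClosure F) (u : F)) (Nat.pos_of_ne_zero hgne)
    have hlam0ne : lam0 ≠ 0 := by
      intro h0; rw [h0, zero_pow hgne] at hlam0; exact hu0 hlam0.symm
    refine ⟨Units.mk0 lam0 hlam0ne, fun k => ?_, by simpa using hlam0⟩
    by_cases hk : yP P k = 0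
    · rw [hk]; simp
    · have hdvd : gb a (yP P) ∣ a k := Finset.gcd_dvd (by simp [hk])
      have h1 : (Units.mk0 lam0 hlam0ne : AlgebraicClosure F) ^ a k
          = algebraMap F (AlgebraicClosure F) ((u : F) ^ (a k / gb a (yP P))) := by
        have hmul : gb a (yP P) * (a k / gb a (yP P)) = a k := Nat.mul_div_cancel' hdvd
        calc (lam0 : AlgebraicClosure F) ^ a k
            = (lam0 ^ gb a (yP P)) ^ (a k / gb a (yP P)) := by rw [← pow_mul, hmul]
          _ = _ := by rw [hlam0, map_pow]
      rw [h1, ← map_mul]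
  have step1 : Nat.card ↥(VRat F n a Fp) * (q - 1) ≤ Nat.card ↥Sol := by
    choose lamP hlamrel hlampow using hscale
    have hwSol : ∀ (P : ↥(VRat F n a Fp)) (u : Fˣ),
        (fun k => (u : F) ^ (a k / gb a (yP P)) * yP P k) ∈ Sol := by
      intro P u
      constructor
      · intro h0
        obtain ⟨k, hk⟩ := hsupp P
        have h1 := congrFun h0 k
        exact (mul_ne_zero (pow_ne_zero _ (Units.ne_zero u)) hk) h1
      · exact eval_zero_of_unit_rel a d Fp hF (yP P) _ (hyev P) (lamP P u) (hlamrel P u)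
    have hwcls : ∀ (P : ↥(VRat F n a Fp)) (u : Fˣ),
        wcls a (liftv F n (fun k => (u : F) ^ (a k / gb a (yP P)) * yP P k)) = ↑P := by
      intro P u
      rw [← hycls P]
      have hrel' : (wSetoid (AlgebraicClosure F) n a).r (liftv F n (yP P))
          (liftv F n fun k => (u : F) ^ (a k / gb a (yP P)) * yP P k) :=
        ⟨lamP P u, hlamrel P u⟩
      exact (Quotient.sound hrel').symm
    set Φ : (↥(VRat F n a Fp)) × Fˣ → ↥Sol := fun Pu =>
      ⟨_, hwSol Pu.1 Pu.2⟩ with hΦdef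
    have hΦinj : Function.Injective Φ := by
      rintro ⟨P, u⟩ ⟨P', u'⟩ hEq
      have hval : (fun k => (u : F) ^ (a k / gb a (yP P)) * yP P k)
          = (fun k => (u' : F) ^ (a k / gb a (yP P')) * yP P' k) := congrArg Subtype.val hEq
      have hPP : P = P' := by
        apply Subtype.ext
        rw [← hwcls P u, ← hwcls P' u']
        exact congrArg (fun v => wcls a (liftv F n v)) hval
      subst hPP
      have hlameq : lamP P u ^ gb a (yP P) = lamP P u' ^ gb a (yP P) := by
        apply hgpow a (yP P)
        intro k hk
        apply Units.ext
        rw [Units.val_pow_eq_pow_val, Units.val_pow_eq_pow_val]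
        have hy' : algebraMap F (AlgebraicClosure F) (yP P k) ≠ 0 :=
          (map_ne_zero_iff _ hφ).mpr hk
        have e1 := hlamrel P u k
        have e2 := hlamrel P u' k
        rw [congrFun hval k] at e1
        exact mul_right_cancel₀ hy' (e1.trans e2.symm)
      have hphi : algebraMap F (AlgebraicClosure F) (u : F)
          = algebraMap F (AlgebraicClosure F) (u' : F) := by
        rw [← hlampow P u, ← hlampow P u']
        have := congrArg Units.val hlameq
        simpa [Units.val_pow_eq_pow_val] using this
      exact Prod.ext rfl (Units.ext (hφ hphi))
    calc Nat.card ↥(VRat F n a Fp) * (q - 1)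
        = Nat.card ((↥(VRat F n a Fp)) × Fˣ) := by rw [Nat.card_prod, hcardU]
      _ ≤ Nat.card ↥Sol := Nat.card_le_card_of_injective Φ hΦinj

  have step3 : ∀ j : ℕ, Nat.card ↥(SolJ j) ≤ Nat.card ↥(VRat F n (Function.update a i 1)
      (pistar F n a i (sigmaPoly F n i (δ : F) j Fp))) * (q - 1) := by
    intro j
    set a' : Fin (n + 1) → ℕ := Function.update a i 1 with ha'def
    set Gp : MvPolynomial (Fin (n + 1)) F := pistar F n a i (sigmaPoly F n i (δ : F) j Fp)
      with hGpdef
    haveI := hVfin a' Gp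
    have hx : ∀ P : ↥(VRat F n a' Gp), ∃ y : Fin (n + 1) → F,
        y ≠ 0 ∧ MvPolynomial.eval y Gp = 0 ∧ wcls a' (liftv F n y) = ↑P := fun P => P.2
    choose zP hz0 hzev hzcls using hx
    have hmemV : ∀ z : ↥(SolJ j), wcls a' (liftv F n (z : Fin (n + 1) → F)) ∈ VRat F n a' Gp :=
      fun z => ⟨(z : Fin (n + 1) → F), z.2.1, z.2.2, rfl⟩
    have hlam : ∀ z : ↥(SolJ j), ∃ lam : (AlgebraicClosure F)ˣ,
        ∀ k, (lam : AlgebraicClosure F) ^ a' k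
            * algebraMap F (AlgebraicClosure F) (zP ⟨_, hmemV z⟩ k)
          = algebraMap F (AlgebraicClosure F) ((z : Fin (n + 1) → F) k) := by
      intro z
      have h1 : wcls a' (liftv F n (zP ⟨_, hmemV z⟩))
          = wcls a' (liftv F n (z : Fin (n + 1) → F)) := hzcls ⟨_, hmemV z⟩
      exact Quotient.exact h1
    choose lamz hlamz using hlam
    have hu : ∀ z : ↥(SolJ j), ∃ u : Fˣ, algebraMap F (AlgebraicClosure F) (u : F)
        = (lamz z : AlgebraicClosure F) ^ gb a' (zP ⟨_, hmemV z⟩) :=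
      fun z => hrange a' _ _ (lamz z) (hlamz z)
    choose uz huz using hu
    set Φ : ↥(SolJ j) → (↥(VRat F n a' Gp)) × Fˣ := fun z => (⟨_, hmemV z⟩, uz z) with hΦdef
    have hΦinj : Function.Injective Φ := by
      intro z z' hEq
      have hP : (⟨_, hmemV z⟩ : ↥(VRat F n a' Gp)) = ⟨_, hmemV z'⟩ := congrArg Prod.fst hEq
      have hu' : uz z = uz z' := congrArg Prod.snd hEq
      have hy : zP ⟨_, hmemV z⟩ = zP ⟨_, hmemV z'⟩ := by rw [hP]
      have hgeq : (lamz z : AlgebraicClosure F) ^ gb a' (zP ⟨_, hmemV z'⟩)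
          = (lamz z' : AlgebraicClosure F) ^ gb a' (zP ⟨_, hmemV z'⟩) := by
        rw [← hy, ← huz z, hu', huz z', hy]
      apply Subtype.ext
      funext k
      apply hφ
      rw [← hlamz z k, ← hlamz z' k, hy]
      by_cases hk : zP ⟨_, hmemV z'⟩ k = 0
      · rw [hk]; simp
      · have hdvd : gb a' (zP ⟨_, hmemV z'⟩) ∣ a' k := Finset.gcd_dvd (by simp [hk])
        congr 1
        have hmul : gb a' (zP ⟨_, hmemV z'⟩) * (a' k / gb a' (zP ⟨_, hmemV z'⟩)) = a' k :=
          Nat.mul_div_cancel' hdvd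
        calc (lamz z : AlgebraicClosure F) ^ a' k
            = ((lamz z : AlgebraicClosure F) ^ gb a' (zP ⟨_, hmemV z'⟩))
                ^ (a' k / gb a' (zP ⟨_, hmemV z'⟩)) := by rw [← pow_mul, hmul]
          _ = ((lamz z' : AlgebraicClosure F) ^ gb a' (zP ⟨_, hmemV z'⟩))
                ^ (a' k / gb a' (zP ⟨_, hmemV z'⟩)) := by rw [hgeq]
          _ = (lamz z' : AlgebraicClosure F) ^ a' k := by rw [← pow_mul, hmul]
    calc Nat.card ↥(SolJ j)
        ≤ Nat.card ((↥(VRat F n a' Gp)) × Fˣ) := Nat.card_le_card_of_injective Φ hΦinj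
      _ = Nat.card ↥(VRat F n a' Gp) * (q - 1) := by rw [Nat.card_prod, hcardU]

  have hpair : ∀ c : Fˣ, ∃ j : ℕ, j < r ∧ ∃ W : ℕ → Fˣ,
      (∀ t t', t < r → t' < r → W t = W t' → t = t') ∧ ∀ t, δ ^ j * (W t) ^ a i = c :=
    fun c => exists_W δ hδ (q - 1) (by rw [hq]) (a i) r (ha i) hr c
  choose jc hjcr Wc hWinj hWeq using hpair
  have step2 : r * Nat.card ↥Sol ≤ ∑ j ∈ Finset.range r, Nat.card ↥(SolJ j) := by
    have hmem0 : ∀ (y : Fin (n + 1) → F), y ∈ Sol → y i = 0 → ∀ j : ℕ, y ∈ SolJ j := by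
      intro y hy h0 j
      refine ⟨hy.1, ?_⟩
      rw [eval_pistar_sigma, h0, zero_pow (ha i).ne', mul_zero]
      have hupd : Function.update y i (0 : F) = y := by
        rw [← h0, Function.update_eq_self]
      rw [hupd]
      exact hy.2
    have hupd1 : ∀ (y : Fin (n + 1) → F) (h0 : y i ≠ 0) (t : ℕ),
        Function.update (Function.update y i ((Wc (Units.mk0 (y i) h0) t : Fˣ) : F)) i
          ((δ : F) ^ (jc (Units.mk0 (y i) h0))
            * (Function.update y i ((Wc (Units.mk0 (y i) h0) t : Fˣ) : F) i) ^ a i) = y := by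
      intro y h0 t
      rw [Function.update_self, Function.update_idem]
      have hval : (δ : F) ^ (jc (Units.mk0 (y i) h0))
          * ((Wc (Units.mk0 (y i) h0) t : Fˣ) : F) ^ a i = y i := by
        have h2 := congrArg Units.val (hWeq (Units.mk0 (y i) h0) t)
        simpa using h2
      rw [hval, Function.update_eq_self]
    have hmem1 : ∀ (y : Fin (n + 1) → F) (hy : y ∈ Sol) (h0 : y i ≠ 0) (t : ℕ),
        Function.update y i ((Wc (Units.mk0 (y i) h0) t : Fˣ) : F)
          ∈ SolJ (jc (Units.mk0 (y i) h0)) := by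
      intro y hy h0 t
      constructor
      · intro hzero
        have h1 := congrFun hzero i
        rw [Function.update_self] at h1
        exact Units.ne_zero _ h1
      · rw [eval_pistar_sigma, hupd1 y h0 t]
        exact hy.2
    set Ψ : (Fin r) × ↥Sol → (Σ t : Fin r, ↥(SolJ (t : ℕ))) := fun p =>
      if h0 : (p.2 : Fin (n + 1) → F) i = 0 then
        ⟨p.1, ⟨(p.2 : Fin (n + 1) → F), hmem0 _ p.2.2 h0 _⟩⟩
      else
        ⟨⟨jc (Units.mk0 ((p.2 : Fin (n + 1) → F) i) h0), hjcr _⟩,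
          ⟨Function.update (p.2 : Fin (n + 1) → F) i
              ((Wc (Units.mk0 ((p.2 : Fin (n + 1) → F) i) h0) ((p.1 : ℕ)) : Fˣ) : F),
            hmem1 _ p.2.2 h0 _⟩⟩ with hΨdef
    set recf : (Σ t : Fin r, ↥(SolJ (t : ℕ))) → (Fin (n + 1) → F) := fun s =>
      Function.update (s.2 : Fin (n + 1) → F) i
        ((δ : F) ^ (s.1 : ℕ) * (s.2 : Fin (n + 1) → F) i ^ a i) with hrecfdef
    set vali : (Σ t : Fin r, ↥(SolJ (t : ℕ))) → F :=
      fun s => (s.2 : Fin (n + 1) → F) i with hvalidef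
    have hvpos : ∀ (t : Fin r) (ys : ↥Sol) (h0 : (ys : Fin (n + 1) → F) i = 0),
        Ψ (t, ys) = ⟨t, ⟨(ys : Fin (n + 1) → F), hmem0 _ ys.2 h0 _⟩⟩ := by
      intro t ys h0
      rw [hΨdef]
      exact dif_pos h0
    have hvneg : ∀ (t : Fin r) (ys : ↥Sol) (h0 : ¬ (ys : Fin (n + 1) → F) i = 0),
        Ψ (t, ys) = ⟨⟨jc (Units.mk0 ((ys : Fin (n + 1) → F) i) h0), hjcr _⟩,
          ⟨Function.update (ys : Fin (n + 1) → F) i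
              ((Wc (Units.mk0 ((ys : Fin (n + 1) → F) i) h0) ((t : ℕ)) : Fˣ) : F),
            hmem1 _ ys.2 h0 _⟩⟩ := by
      intro t ys h0
      rw [hΨdef]
      exact dif_neg h0
    have hrec : ∀ p, recf (Ψ p) = ↑p.2 := by
      rintro ⟨t, ys⟩
      by_cases h0 : (ys : Fin (n + 1) → F) i = 0
      · rw [hvpos t ys h0, hrecfdef]
        show Function.update (ys : Fin (n + 1) → F) i
          ((δ : F) ^ (t : ℕ) * (ys : Fin (n + 1) → F) i ^ a i) = ↑ys
        rw [h0, zero_pow (ha i).ne', mul_zero]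
        have hupd : Function.update (ys : Fin (n + 1) → F) i (0 : F) = ↑ys := by
          rw [← h0, Function.update_eq_self]
        exact hupd
      · rw [hvneg t ys h0, hrecfdef]
        exact hupd1 _ h0 _
    have hΨinj : Function.Injective Ψ := by
      rintro ⟨t, ys⟩ ⟨t', ys'⟩ hEq
      have hyy : (ys : Fin (n + 1) → F) = ys' := by
        rw [← hrec (t, ys), ← hrec (t', ys'), hEq]
      have hys : ys = ys' := Subtype.ext hyy
      subst hys
      by_cases h0 : (ys : Fin (n + 1) → F) i = 0
      · rw [hvpos t ys h0, hvpos t' ys h0] at hEq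
        have h1 : t = t' := congrArg Sigma.fst hEq
        exact Prod.ext h1 rfl
      · rw [hvneg t ys h0, hvneg t' ys h0] at hEq
        have h1 : Function.update (ys : Fin (n + 1) → F) i
              ((Wc (Units.mk0 ((ys : Fin (n + 1) → F) i) h0) ((t : ℕ)) : Fˣ) : F) i
            = Function.update (ys : Fin (n + 1) → F) i
              ((Wc (Units.mk0 ((ys : Fin (n + 1) → F) i) h0) ((t' : ℕ)) : Fˣ) : F) i :=
          congrArg vali hEq
        rw [Function.update_self, Function.update_self] at h1
        have h2 : Wc (Units.mk0 _ h0) (t : ℕ) = Wc (Units.mk0 _ h0) (t' : ℕ) := Units.ext h1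
        have h3 := hWinj (Units.mk0 _ h0) _ _ t.isLt t'.isLt h2
        exact Prod.ext (Fin.ext h3) rfl
    have hcard1 : Nat.card ((Fin r) × ↥Sol) = r * Nat.card ↥Sol := by
      rw [Nat.card_prod, Nat.card_eq_fintype_card (α := Fin r), Fintype.card_fin]
    have hle : Nat.card ((Fin r) × ↥Sol) ≤ Nat.card (Σ t : Fin r, ↥(SolJ (t : ℕ))) :=
      Nat.card_le_card_of_injective Ψ hΨinj
    have hcard2 : Nat.card (Σ t : Fin r, ↥(SolJ (t : ℕ)))
        = ∑ j ∈ Finset.range r, Nat.card ↥(SolJ j) := by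
      haveI : ∀ t : Fin r, Fintype ↥(SolJ (t : ℕ)) := fun t => Fintype.ofFinite _
      rw [Nat.card_eq_fintype_card, Fintype.card_sigma,
        ← Fin.sum_univ_eq_sum_range (fun j => Nat.card ↥(SolJ j)) r]
      congr 1
      funext t
      rw [Nat.card_eq_fintype_card]
    omega
  have hfinal : (r * Nat.card (VRat F n a Fp)) * (q - 1) ≤
      (∑ j ∈ Finset.range r, Nat.card (VRat F n (Function.update a i 1)
        (pistar F n a i (sigmaPoly F n i (δ : F) j Fp)))) * (q - 1) := by
    calc (r * Nat.card (VRat F n a Fp)) * (q - 1)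
        = r * (Nat.card ↥(VRat F n a Fp) * (q - 1)) := by ring
      _ ≤ r * Nat.card ↥Sol := Nat.mul_le_mul_left r step1
      _ ≤ ∑ j ∈ Finset.range r, Nat.card ↥(SolJ j) := step2
      _ ≤ ∑ j ∈ Finset.range r, Nat.card (VRat F n (Function.update a i 1)
            (pistar F n a i (sigmaPoly F n i (δ : F) j Fp))) * (q - 1) :=
          Finset.sum_le_sum fun j _ => step3 j
      _ = (∑ j ∈ Finset.range r, Nat.card (VRat F n (Function.update a i 1)
            (pistar F n a i (sigmaPoly F n i (δ : F) j Fp)))) * (q - 1) :=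
          (Finset.sum_mul _ _ _).symm
  exact Nat.le_of_mul_le_mul_right hfinal hm0

end
end

section
/- With the notation of the previous statement, assume in addition that gcd(a_i, a_j) = 1 for all i ≠ j. Then equality holds: N(F) = (1/r_i) Σ_{j=0}^{r_i-1} N(π_i^*(F ∘ σ_i^j)). -/
noncomputable section

open MvPolynomial

/-! ### Auxiliary lemmas -/

section Aux

open Finset

private lemma eval_bind1 {R : Type*} [CommSemiring R] {n : ℕ} (g : Fin (n + 1) → R)
    (h : Fin (n + 1) → MvPolynomial (Fin (n + 1)) R) (φ : MvPolynomial (Fin (n + 1)) R) :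
    eval g (bind₁ h φ) = eval (fun k => eval g (h k)) φ := by
  simpa using eval₂Hom_bind₁ (RingHom.id R) g h φ

private lemma algebraMap_eval {F : Type} [Field F] {n : ℕ} (y : Fin (n + 1) → F)
    (Fp : MvPolynomial (Fin (n + 1)) F) :
    algebraMap F (AlgebraicClosure F) (eval y Fp)
      = eval (liftv F n y) (map (algebraMap F (AlgebraicClosure F)) Fp) := by
  have h1 : eval y Fp = eval₂ (RingHom.id F) y Fp := rfl
  rw [h1, eval₂_comp_left (algebraMap F (AlgebraicClosure F)) (RingHom.id F) y Fp,
    RingHom.comp_id, eval₂_eq_eval_map]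
  rfl

/-- Bezout trick for groups: if `u^p = v^p` and `u^q = v^q` with `gcd p q = 1`, then `u = v`. -/
private lemma eq_of_pow_eq_pow_of_coprime {G : Type*} [CommGroup G] {u v : G} {p q : ℕ}
    (hpq : Nat.gcd p q = 1) (h1 : u ^ p = v ^ p) (h2 : u ^ q = v ^ q) : u = v := by
  have key : (u * v⁻¹) ^ ((p : ℤ) * Nat.gcdA p q + (q : ℤ) * Nat.gcdB p q) = 1 := by
    rw [zpow_add, zpow_mul, zpow_mul]
    have e1 : (u * v⁻¹) ^ (p : ℤ) = 1 := by
      rw [zpow_natCast, mul_pow, h1, inv_pow, mul_inv_cancel]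
    have e2 : (u * v⁻¹) ^ (q : ℤ) = 1 := by
      rw [zpow_natCast, mul_pow, h2, inv_pow, mul_inv_cancel]
    rw [e1, e2, one_zpow, one_zpow, one_mul]
  rw [← Nat.gcd_eq_gcd_ab, hpq] at key
  simpa [mul_inv_eq_one] using key

/-- Bezout trick for fields: if two coprime powers of a nonzero `lam` lie in the image of a
field embedding, then so does `lam`. -/
private lemma exists_preimage_of_pows {F K : Type*} [Field F] [Field K] (φ : F →+* K)
    {lam : K} (hlam : lam ≠ 0) {p q : ℕ} (hpq : Nat.gcd p q = 1) {b₁ b₂ : F}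
    (h1 : lam ^ p = φ b₁) (h2 : lam ^ q = φ b₂) : ∃ c : F, φ c = lam := by
  refine ⟨b₁ ^ Nat.gcdA p q * b₂ ^ Nat.gcdB p q, ?_⟩
  rw [map_mul, map_zpow₀, map_zpow₀, ← h1, ← h2, ← zpow_natCast lam p, ← zpow_natCast lam q,
    ← zpow_mul, ← zpow_mul, ← zpow_add₀ hlam, ← Nat.gcd_eq_gcd_ab, hpq]
  exact zpow_one lam

private lemma nat_card_eq_filter {α : Type*} [Fintype α] (p : α → Prop) [DecidablePred p] :
    Nat.card {x // p x} = (Finset.univ.filter p).card := by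
  rw [Nat.card_eq_fintype_card, Fintype.card_subtype]

end Aux

section LemA

open Finset

variable {F : Type} [Field F] [Fintype F]

/-- Rational version of weighted homogeneity. -/
private lemma eval_scale {n d : ℕ} {a : Fin (n + 1) → ℕ} {Fp : MvPolynomial (Fin (n + 1)) F}
    (hF : WHomog F n a Fp d) (μ : F) (y : Fin (n + 1) → F) :
    eval (fun k => μ ^ a k * y k) Fp = μ ^ d * eval y Fp := by
  apply (algebraMap F (AlgebraicClosure F)).injective
  rw [map_mul, map_pow, algebraMap_eval, algebraMap_eval]
  have h := hF (algebraMap F (AlgebraicClosure F) μ) (liftv F n y)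
  rw [← h]
  have : liftv F n (fun k => μ ^ a k * y k)
      = fun k => algebraMap F (AlgebraicClosure F) μ ^ a k * liftv F n y k :=
    funext fun k => by simp [liftv]
  rw [this]

/-- Key fiber lemma: over a class with a rational representative, the set of rational
representatives (within the nonzero vanishing locus) has exactly `q - 1` elements. -/
private lemma fiber_card {n d : ℕ} {a : Fin (n + 1) → ℕ} (ha : ∀ i, 0 < a i)
    (hcop : ∀ k l : Fin (n + 1), k ≠ l → Nat.gcd (a k) (a l) = 1)
    {Fp : MvPolynomial (Fin (n + 1)) F} (hF : WHomog F n a Fp d)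
    [DecidablePred (fun y : Fin (n + 1) → F => y ≠ 0 ∧ eval y Fp = 0)]
    (x : Fin (n + 1) → F)
    [DecidablePred (fun y : Fin (n + 1) → F => wcls a (liftv F n y) = wcls a (liftv F n x))]
    (hx0 : x ≠ 0) (hxe : eval x Fp = 0) :
    ((univ.filter (fun y : Fin (n + 1) → F => y ≠ 0 ∧ eval y Fp = 0)).filter
        (fun y => wcls a (liftv F n y) = wcls a (liftv F n x))).card
      = Fintype.card F - 1 := by
  classical
  set K := AlgebraicClosure F
  have φinj : Function.Injective (algebraMap F K) := (algebraMap F K).injective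
  obtain ⟨k₀, hk₀⟩ := Function.ne_iff.mp hx0
  rw [← Fintype.card_units (α := F)]
  by_cases hsup : ∃ l, l ≠ k₀ ∧ x l ≠ 0
  · -- at least two nonzero coordinates
    obtain ⟨l, hlk, hl⟩ := hsup
    refine (Finset.card_bij (fun (μ : Fˣ) _ => fun k => (μ : F) ^ a k * x k) ?_ ?_ ?_).symm
    · intro μ _
      simp only [mem_filter, mem_univ, true_and]
      refine ⟨⟨?_, ?_⟩, ?_⟩
      · intro h
        apply hk₀
        have := congrFun h k₀
        simp only [Pi.zero_apply, mul_eq_zero, pow_eq_zero_iff'] at this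
        rcases this with h' | h'
        · exact absurd h'.1 μ.ne_zero
        · exact h'
      · rw [eval_scale hF, hxe, mul_zero]
      · symm
        apply Quotient.sound
        refine ⟨Units.map (algebraMap F K : F →* K) μ, fun k => ?_⟩
        simp only [liftv, Units.coe_map, MonoidHom.coe_coe, ← map_pow, ← map_mul]
        exact (map_mul _ _ _).symm
    · intro μ _ ν _ h
      have hpow : ∀ k, x k ≠ 0 → (μ : F) ^ a k = (ν : F) ^ a k := by
        intro k hk
        have := congrFun h k
        exact mul_right_cancel₀ hk this
      have h1 := hpow k₀ hk₀
      have h2 := hpow l hl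
      exact Units.ext <| by
        exact_mod_cast congrArg Units.val
          (eq_of_pow_eq_pow_of_coprime (hcop k₀ l (Ne.symm hlk))
            (Units.ext (by exact_mod_cast h1)) (Units.ext (by exact_mod_cast h2)))
    · intro y hy
      simp only [mem_filter, mem_univ, true_and] at hy
      obtain ⟨⟨hy0, hye⟩, hyc⟩ := hy
      obtain ⟨lam, hlam⟩ := Quotient.exact hyc
      -- lam ^ a k * liftv y k = liftv x k
      have hyk₀ : y k₀ ≠ 0 := by
        intro h
        apply hk₀
        have := hlam k₀
        simp only [liftv, h, map_zero, mul_zero] at this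
        exact φinj (by simpa using this.symm)
      have hyl : y l ≠ 0 := by
        intro h
        apply hl
        have := hlam l
        simp only [liftv, h, map_zero, mul_zero] at this
        exact φinj (by simpa using this.symm)
      have hker : ∀ b : F, b ≠ 0 → algebraMap F K b ≠ 0 := fun b hb h0 =>
        hb (φinj (by simpa using h0))
      have hp1 : (lam : K) ^ a k₀ = algebraMap F K (x k₀ / y k₀) := by
        rw [map_div₀, eq_div_iff (hker _ hyk₀)]
        exact hlam k₀
      have hp2 : (lam : K) ^ a l = algebraMap F K (x l / y l) := by
        rw [map_div₀, eq_div_iff (hker _ hyl)]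
        exact hlam l
      obtain ⟨c, hc⟩ := exists_preimage_of_pows (algebraMap F K) lam.ne_zero
        (hcop k₀ l (Ne.symm hlk)) hp1 hp2
      have hcne : c ≠ 0 := by
        intro h
        apply lam.ne_zero
        rw [← hc, h, map_zero]
      have hkey : ∀ k, c ^ a k * y k = x k := by
        intro k
        apply φinj
        have := hlam k
        simp only [liftv] at this
        rw [map_mul, map_pow, hc]
        exact this
      refine ⟨(Units.mk0 c hcne)⁻¹, mem_univ _, funext fun k => ?_⟩
      have := hkey k
      field_simp
      rw [← this]
      rw [Units.val_inv_eq_inv_val, Units.val_mk0, ← mul_assoc, ← mul_pow, inv_mul_cancel₀ hcne, one_pow, one_mul]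
  · -- single nonzero coordinate k₀
    push_neg at hsup
    refine (Finset.card_bij (fun (cu : Fˣ) _ => Function.update x k₀ (cu : F)) ?_ ?_ ?_).symm
    · intro cu _
      -- find a root lam of lam ^ a k₀ = cu / x k₀ in the algebraic closure
      obtain ⟨lam, hlamr⟩ := IsAlgClosed.exists_pow_nat_eq
        (algebraMap F K ((cu : F) / x k₀)) (ha k₀)
      have hlam0 : lam ≠ 0 := by
        intro h
        rw [h, zero_pow (ha k₀).ne'] at hlamr
        have : ((cu : F) / x k₀) = 0 := φinj (by simpa using hlamr.symm)
        rw [div_eq_zero_iff] at this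
        exact absurd this (by push_neg; exact ⟨cu.ne_zero, hk₀⟩)
      have hxk₀ : x k₀ ≠ 0 := hk₀
      have hsc : ∀ k, lam ^ a k * liftv F n x k = liftv F n (Function.update x k₀ (cu : F)) k := by
        intro k
        rcases eq_or_ne k k₀ with rfl | hkk
        · simp only [liftv, Function.update_self, hlamr, ← map_mul]
          congr 1
          exact (map_mul (algebraMap F K) _ _).symm.trans (congrArg (algebraMap F K) (div_mul_cancel₀ (cu : F) hxk₀))
        · simp only [liftv, Function.update_of_ne hkk, hsup k hkk, map_zero, mul_zero]
      simp only [mem_filter, mem_univ, true_and]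
      refine ⟨⟨?_, ?_⟩, ?_⟩
      · intro h
        have := congrFun h k₀
        simp only [Function.update_self] at this
        exact cu.ne_zero this
      · apply φinj
        rw [algebraMap_eval, map_zero]
        have : liftv F n (Function.update x k₀ (cu : F)) = fun k => lam ^ a k * liftv F n x k :=
          funext fun k => (hsc k).symm
        rw [this, hF lam (liftv F n x), ← algebraMap_eval, hxe, map_zero, mul_zero]
      · symm
        apply Quotient.sound
        exact ⟨Units.mk0 lam hlam0, hsc⟩
    · intro cu _ cv _ h
      have := congrFun h k₀
      simp only [Function.update_self] at this
      exact Units.ext this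
    · intro y hy
      simp only [mem_filter, mem_univ, true_and] at hy
      obtain ⟨⟨hy0, hye⟩, hyc⟩ := hy
      obtain ⟨lam, hlam⟩ := Quotient.exact hyc
      have hyz : ∀ k, k ≠ k₀ → y k = 0 := by
        intro k hk
        have := hlam k
        simp only [liftv, hsup k hk, map_zero] at this
        have h2 : algebraMap F K (y k) = 0 := by
          rcases mul_eq_zero.mp this with h | h
          · exact absurd h (pow_ne_zero _ lam.ne_zero)
          · exact h
        exact φinj (by simpa using h2)
      have hyk₀ : y k₀ ≠ 0 := by
        intro h
        apply hy0
        funext k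
        rcases eq_or_ne k k₀ with rfl | hk
        · exact h
        · exact hyz k hk
      refine ⟨Units.mk0 (y k₀) hyk₀, mem_univ _, funext fun k => ?_⟩
      rcases eq_or_ne k k₀ with rfl | hk
      · simp only [Function.update_self, Units.val_mk0]
      · simp only [Function.update_of_ne hk]
        exact (hyz k hk) ▸ (hsup k hk)

/-- The projective count times `q - 1` is the affine count. -/
private lemma lemA {n d : ℕ} {a : Fin (n + 1) → ℕ} (ha : ∀ i, 0 < a i)
    (hcop : ∀ k l : Fin (n + 1), k ≠ l → Nat.gcd (a k) (a l) = 1)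
    {Fp : MvPolynomial (Fin (n + 1)) F} (hF : WHomog F n a Fp d) :
    (Fintype.card F - 1) * Nat.card (VRat F n a Fp)
      = Nat.card {y : Fin (n + 1) → F // y ≠ 0 ∧ eval y Fp = 0} := by
  classical
  set f : (Fin (n + 1) → F) → WP (AlgebraicClosure F) n a :=
    fun y => wcls a (liftv F n y) with hf
  set S : Finset (Fin (n + 1) → F) :=
    univ.filter (fun y => y ≠ 0 ∧ eval y Fp = 0) with hS
  have h1 : VRat F n a Fp = ↑(S.image f) := by
    ext P
    simp only [VRat, Set.mem_setOf_eq, coe_image, Set.mem_image, mem_coe, hS, mem_filter,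
      mem_univ, true_and, hf]
    constructor
    · rintro ⟨y, h1, h2, h3⟩; exact ⟨y, ⟨h1, h2⟩, h3⟩
    · rintro ⟨y, ⟨h1, h2⟩, h3⟩; exact ⟨y, h1, h2, h3⟩
  have h2 : Nat.card (VRat F n a Fp) = (S.image f).card := by
    rw [h1, Nat.card_coe_set_eq, Set.ncard_coe_finset]
  have h3 : Nat.card {y : Fin (n + 1) → F // y ≠ 0 ∧ eval y Fp = 0} = S.card :=
    nat_card_eq_filter _
  rw [h2, h3, card_eq_sum_card_image f S]
  rw [Finset.sum_congr rfl (fun b hb => ?_), Finset.sum_const, smul_eq_mul, mul_comm]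
  obtain ⟨x, hxS, rfl⟩ := Finset.mem_image.mp hb
  simp only [hS, mem_filter, mem_univ, true_and] at hxS
  exact fiber_card ha hcop hF x hxS.1 hxS.2

end LemA

section LemC

open Finset

/-- The key counting lemma in `Fˣ`: summing over `j < r = gcd(m, q - 1)` the number of
solutions `t` of `δ^j t^m = c` gives exactly `r`. -/
private lemma lemC {F : Type} [Field F] [Fintype F] {m : ℕ} (hm : 0 < m)
    (δ : Fˣ) (hδ : ∀ z : Fˣ, z ∈ Subgroup.zpowers δ) {r : ℕ}
    (hr : r = Nat.gcd m (Fintype.card F - 1)) (c : F) :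
    ∑ j ∈ Finset.range r,
        Nat.card {t : F // (δ : F) ^ j * t ^ m = c} = r := by
  classical
  have hcv : ∀ j, Nat.card {t : F // (δ : F) ^ j * t ^ m = c}
      = (univ.filter (fun t : F => (δ : F) ^ j * t ^ m = c)).card := fun j =>
    nat_card_eq_filter _
  simp only [hcv]
  have hN : Fintype.card Fˣ = Fintype.card F - 1 := by
    rw [Fintype.card_units]
  set N := Fintype.card Fˣ with hNdef
  have horder : orderOf δ = N := by
    have h := orderOf_eq_card_of_forall_mem_zpowers hδ
    rwa [Nat.card_eq_fintype_card] at h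
  have hrN : r = Nat.gcd m N := by rw [hr, hN]
  have hN0 : N ≠ 0 := Fintype.card_ne_zero
  have hr0 : r ≠ 0 := by
    rw [hrN]
    exact (Nat.gcd_pos_of_pos_left N hm).ne'
  have hrdvdN : r ∣ N := hrN ▸ Nat.gcd_dvd_right m N
  have hrdvdm : r ∣ m := hrN ▸ Nat.gcd_dvd_left m N
  rcases eq_or_ne c 0 with rfl | hc
  · have hz : ∀ j, (univ.filter fun t : F => (δ : F) ^ j * t ^ m = 0) = {0} := by
      intro j
      ext t
      simp [mul_eq_zero, pow_eq_zero_iff hm.ne', pow_ne_zero j δ.ne_zero]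
    simp only [hz, card_singleton, Finset.sum_const, card_range, smul_eq_mul, mul_one]
  · set cu : Fˣ := Units.mk0 c hc with hcu
    have hcoerce : ∀ j, (univ.filter fun t : F => (δ : F) ^ j * t ^ m = c).card
        = (univ.filter fun t : Fˣ => δ ^ j * t ^ m = cu).card := by
      intro j
      refine (Finset.card_bij (fun (t : Fˣ) _ => (t : F)) ?_ ?_ ?_).symm
      · intro t ht
        simp only [mem_filter, mem_univ, true_and] at ht ⊢
        have := congrArg Units.val ht
        simpa [hcu] using this
      · intro t _ s _ h
        exact Units.ext h
      · intro t ht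
        simp only [mem_filter, mem_univ, true_and] at ht
        have ht0 : t ≠ 0 := by
          intro h
          rw [h, zero_pow hm.ne', mul_zero] at ht
          exact hc ht.symm
        refine ⟨Units.mk0 t ht0, ?_, rfl⟩
        simp only [mem_filter, mem_univ, true_and]
        apply Units.ext
        simpa [hcu] using ht
    -- number of m-th roots of a unit
    have key : ∀ b : Fˣ, (univ.filter fun t : Fˣ => t ^ m = b).card
        = if ∃ t : Fˣ, t ^ m = b then r else 0 := by
      intro b
      split_ifs with hex
      · obtain ⟨t₀, ht₀⟩ := hex
        have hbij : (univ.filter fun t : Fˣ => t ^ m = b).card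
            = (univ.filter fun t : Fˣ => t ^ m = 1).card := by
          refine Finset.card_bij (fun t _ => t * t₀⁻¹) ?_ ?_ ?_
          · intro t ht
            simp only [mem_filter, mem_univ, true_and] at ht ⊢
            rw [mul_pow, ht, inv_pow, ht₀, mul_inv_cancel]
          · intro t _ s _ h
            exact mul_right_cancel h
          · intro s hs
            simp only [mem_filter, mem_univ, true_and] at hs
            refine ⟨s * t₀, ?_, by group⟩
            simp only [mem_filter, mem_univ, true_and, mul_pow, hs, ht₀, one_mul]
        rw [hbij]
        have hiff : ∀ t : Fˣ, t ^ m = 1 ↔ t ^ r = 1 := by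
          intro t
          constructor
          · intro h
            have hN1 : t ^ N = 1 := pow_card_eq_one
            have hz : t ^ ((m : ℤ) * Nat.gcdA m N + (N : ℤ) * Nat.gcdB m N) = 1 := by
              rw [zpow_add, zpow_mul, zpow_mul, zpow_natCast, zpow_natCast, h, hN1,
                one_zpow, one_zpow, one_mul]
            rw [← Nat.gcd_eq_gcd_ab, ← hrN] at hz
            simpa [zpow_natCast] using hz
          · intro h
            obtain ⟨s, hs⟩ := hrdvdm
            rw [hs, pow_mul, h, one_pow]
        have hset : (univ.filter fun t : Fˣ => t ^ m = 1)
            = (univ.filter fun t : Fˣ => t ^ r = 1) := by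
          ext t; simp [hiff t]
        rw [hset]
        -- count r-th roots of unity
        haveI : NeZero r := ⟨hr0⟩
        have hNrd : N / r ∣ N := ⟨r, (Nat.div_mul_cancel hrdvdN).symm⟩
        have hζ : orderOf (δ ^ (N / r)) = r := by
          rw [orderOf_pow, horder, Nat.gcd_eq_right hNrd, Nat.div_div_self hrdvdN hN0]
        have hprim : IsPrimitiveRoot (δ ^ (N / r)) r := by
          have h := IsPrimitiveRoot.orderOf (δ ^ (N / r))
          rwa [hζ] at h
        calc (univ.filter fun t : Fˣ => t ^ r = 1).card
            = Fintype.card {t : Fˣ // t ^ r = 1} := (Fintype.card_subtype _).symm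
          _ = Fintype.card (rootsOfUnity r F) :=
              Fintype.card_congr (Equiv.subtypeEquivRight fun t => (mem_rootsOfUnity r t).symm)
          _ = r := Nat.card_eq_fintype_card.symm.trans hprim.card_rootsOfUnity'
      · rw [Finset.card_eq_zero, Finset.filter_eq_empty_iff]
        intro t _ h
        exact hex ⟨t, h⟩
    have hsum : ∀ j, (univ.filter fun t : Fˣ => δ ^ j * t ^ m = cu)
        = (univ.filter fun t : Fˣ => t ^ m = (δ ^ j)⁻¹ * cu) := by
      intro j
      ext t
      simp [eq_inv_mul_iff_mul_eq]
    obtain ⟨m₀, hm₀⟩ : ∃ m₀ : ℕ, δ ^ m₀ = cu := by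
      have h := hδ cu
      rw [← mem_powers_iff_mem_zpowers] at h
      exact (Submonoid.mem_powers_iff cu δ).mp h
    have hsolv : ∀ j, (∃ t : Fˣ, t ^ m = (δ ^ j)⁻¹ * cu) ↔ j % r = m₀ % r := by
      intro j
      constructor
      · rintro ⟨t, ht⟩
        obtain ⟨s, hs⟩ : ∃ s : ℕ, δ ^ s = t := by
          have h := hδ t
          rw [← mem_powers_iff_mem_zpowers] at h
          exact (Submonoid.mem_powers_iff t δ).mp h
        have hkey : δ ^ (j + s * m) = δ ^ m₀ := by
          rw [pow_add, pow_mul, hs, ht, mul_inv_cancel_left, hm₀]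
        have hmod : j + s * m ≡ m₀ [MOD N] := by
          have := pow_eq_pow_iff_modEq.mp hkey
          rwa [horder] at this
        have h1 : j + s * m ≡ m₀ [MOD r] := hmod.of_dvd hrdvdN
        have h2 : (j + s * m) % r = j % r := by
          obtain ⟨u, hu⟩ := hrdvdm
          rw [hu, show s * (r * u) = r * (s * u) by ring]
          exact Nat.add_mul_mod_self_left j r (s * u)
        rw [← h2]
        exact h1
      · intro hjm
        have hdvd : (r : ℤ) ∣ (m₀ : ℤ) - j := (Nat.ModEq.dvd (hjm : j ≡ m₀ [MOD r]))
        obtain ⟨k, hk⟩ := hdvd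
        refine ⟨δ ^ (Nat.gcdA m N * k), ?_⟩
        rw [eq_inv_mul_iff_mul_eq, ← hm₀]
        have e1 : (δ ^ (Nat.gcdA m N * k)) ^ m = δ ^ (Nat.gcdA m N * k * m) := by
          rw [← zpow_natCast (δ ^ (Nat.gcdA m N * k)) m, ← zpow_mul]
        rw [e1, show (δ : Fˣ) ^ j = δ ^ ((j : ℤ)) from (zpow_natCast δ j).symm, ← zpow_add,
          show δ ^ m₀ = δ ^ ((m₀ : ℤ)) from (zpow_natCast δ m₀).symm]
        apply zpow_eq_zpow_iff_modEq.mpr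
        rw [horder]
        have hbez : (r : ℤ) = m * Nat.gcdA m N + N * Nat.gcdB m N := by
          rw [hrN]; exact Nat.gcd_eq_gcd_ab m N
        refine Int.modEq_iff_dvd.mpr ⟨Nat.gcdB m N * k, ?_⟩
        linear_combination hk + k * hbez
    calc ∑ j ∈ Finset.range r, (univ.filter fun t : F => (δ : F) ^ j * t ^ m = c).card
        = ∑ j ∈ Finset.range r, if j = m₀ % r then r else 0 := by
          refine Finset.sum_congr rfl fun j hj => ?_
          rw [hcoerce j, hsum j, key _]
          simp only [hsolv j, Nat.mod_eq_of_lt (mem_range.mp hj)]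
      _ = r := by
          rw [Finset.sum_ite_eq' (Finset.range r) (m₀ % r) (fun _ => r),
            if_pos (mem_range.mpr (Nat.mod_lt _ (Nat.pos_of_ne_zero hr0)))]

end LemC

section LemB

open Finset

variable {F : Type} [Field F] [Fintype F]

/-- The pullback `π_i^*(F ∘ σ_i^j)` is weighted homogeneous of the same degree for the
modified weights. -/
private lemma whomog_G {n d : ℕ} {a : Fin (n + 1) → ℕ} (i : Fin (n + 1)) (δ : F) (j : ℕ)
    {Fp : MvPolynomial (Fin (n + 1)) F} (hF : WHomog F n a Fp d) :
    WHomog F n (Function.update a i 1) (pistar F n a i (sigmaPoly F n i δ j Fp)) d := by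
  intro lam x
  have hexp : ∀ y : Fin (n + 1) → AlgebraicClosure F,
      eval y (map (algebraMap F (AlgebraicClosure F)) (pistar F n a i (sigmaPoly F n i δ j Fp)))
        = eval (fun k => if k = i then algebraMap F (AlgebraicClosure F) δ ^ j * y i ^ a i
            else y k) (map (algebraMap F (AlgebraicClosure F)) Fp) := by
    intro y
    rw [pistar, sigmaPoly, map_bind₁, eval_bind1, map_bind₁, eval_bind1]
    refine congrArg (fun g => eval g (map (algebraMap F (AlgebraicClosure F)) Fp))
      (funext fun k => ?_)
    rcases eq_or_ne k i with rfl | hk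
    · simp [map_pow]
    · simp [hk]
  simp only [hexp]
  have key := hF lam
    (fun k => if k = i then algebraMap F (AlgebraicClosure F) δ ^ j * x i ^ a i else x k)
  rw [← key]
  refine congrArg (fun g => eval g (map (algebraMap F (AlgebraicClosure F)) Fp))
    (funext fun k => ?_)
  rcases eq_or_ne k i with rfl | hk
  · simp only [if_true, eq_self_iff_true, Function.update_self, pow_one, mul_pow]
    ring
  · simp only [if_neg hk, Function.update_of_ne hk]

/-- The affine counting identity. -/
private lemma lemB {n : ℕ} (a : Fin (n + 1) → ℕ) (ha : ∀ i, 0 < a i) (i : Fin (n + 1))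
    (δ : Fˣ) (hδ : ∀ z : Fˣ, z ∈ Subgroup.zpowers δ) {r : ℕ}
    (hr : r = Nat.gcd (a i) (Fintype.card F - 1)) (Fp : MvPolynomial (Fin (n + 1)) F) :
    r * Nat.card {y : Fin (n + 1) → F // y ≠ 0 ∧ eval y Fp = 0}
      = ∑ j ∈ Finset.range r,
          Nat.card {y : Fin (n + 1) → F //
            y ≠ 0 ∧ eval y (pistar F n a i (sigmaPoly F n i (δ : F) j Fp)) = 0} := by
  classical
  set G : ℕ → MvPolynomial (Fin (n + 1)) F :=
    fun j => pistar F n a i (sigmaPoly F n i (δ : F) j Fp) with hG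
  set ψ : ℕ → (Fin (n + 1) → F) → (Fin (n + 1) → F) :=
    fun j y => Function.update y i ((δ : F) ^ j * (y i) ^ a i) with hψ
  have hGev : ∀ j y, eval y (G j) = eval (ψ j y) Fp := by
    intro j y
    show eval y (pistar F n a i (sigmaPoly F n i (δ : F) j Fp)) = eval (ψ j y) Fp
    rw [pistar, sigmaPoly, eval_bind1, eval_bind1]
    refine congrArg (fun g => eval g Fp) (funext fun k => ?_)
    rcases eq_or_ne k i with rfl | hk
    · simp [hψ]
    · simp [hψ, hk, Function.update_of_ne hk]
  set T : Finset (Fin (n + 1) → F) := univ.filter (fun y => y ≠ 0 ∧ eval y Fp = 0) with hT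
  set Tj : ℕ → Finset (Fin (n + 1) → F) :=
    fun j => univ.filter (fun y => y ≠ 0 ∧ eval y (G j) = 0) with hTj
  have hcard1 : Nat.card {y : Fin (n + 1) → F // y ≠ 0 ∧ eval y Fp = 0} = T.card :=
    nat_card_eq_filter _
  have hcard2 : ∀ j, Nat.card {y : Fin (n + 1) → F // y ≠ 0 ∧ eval y (G j) = 0}
      = (Tj j).card := fun j => nat_card_eq_filter _
  rw [hcard1]
  rw [Finset.sum_congr rfl (fun j _ => hcard2 j)]
  -- fiber the `j`-th count over `T` via `ψ j`
  have hmap : ∀ j, ∀ y ∈ Tj j, ψ j y ∈ T := by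
    intro j y hy
    simp only [hTj, mem_filter, mem_univ, true_and] at hy
    obtain ⟨hy0, hye⟩ := hy
    simp only [hT, mem_filter, mem_univ, true_and]
    constructor
    · obtain ⟨k, hk⟩ := Function.ne_iff.mp hy0
      rcases eq_or_ne k i with rfl | hki
      · refine Function.ne_iff.mpr ⟨k, ?_⟩
        simp only [hψ, Function.update_self, Pi.zero_apply]
        exact mul_ne_zero (pow_ne_zero _ δ.ne_zero) (pow_ne_zero _ hk)
      · refine Function.ne_iff.mpr ⟨k, ?_⟩
        simp only [hψ, Function.update_of_ne hki]
        exact hk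
    · rw [← hGev j y]
      exact hye
  have hfib : ∀ j, (Tj j).card = ∑ x ∈ T, ((Tj j).filter (fun y => ψ j y = x)).card :=
    fun j => Finset.card_eq_sum_card_fiberwise (hmap j)
  rw [Finset.sum_congr rfl (fun j _ => hfib j), Finset.sum_comm]
  -- for each x ∈ T, the total fiber count over j < r is r
  have hinner : ∀ x ∈ T, ∑ j ∈ Finset.range r,
      ((Tj j).filter (fun y => ψ j y = x)).card = r := by
    intro x hxT
    simp only [hT, mem_filter, mem_univ, true_and] at hxT
    obtain ⟨hx0, hxe⟩ := hxT
    have hfe : ∀ j, (Tj j).filter (fun y => ψ j y = x)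
        = univ.filter (fun y => ψ j y = x) := by
      intro j
      ext y
      simp only [hTj, mem_filter, mem_univ, true_and, Finset.filter_filter]
      constructor
      · rintro ⟨_, h⟩; exact h
      · intro hψx
        refine ⟨⟨?_, ?_⟩, hψx⟩
        · intro h0
          apply hx0
          rw [← hψx, h0]
          have : ((δ : F) ^ j * ((0 : Fin (n + 1) → F) i) ^ a i) = (0 : Fin (n + 1) → F) i := by
            simp [zero_pow (ha i).ne']
          rw [hψ]
          simp only [this]
          exact Function.update_eq_self i (0 : Fin (n + 1) → F)
        · rw [hGev j y, hψx]
          exact hxe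
    have hbij : ∀ j, (univ.filter (fun y => ψ j y = x)).card
        = (univ.filter (fun t : F => (δ : F) ^ j * t ^ a i = x i)).card := by
      intro j
      refine Finset.card_bij (fun y _ => y i) ?_ ?_ ?_
      · intro y hy
        simp only [mem_filter, mem_univ, true_and] at hy ⊢
        have := congrFun hy i
        simpa [hψ] using this
      · intro y hy y' hy' h
        simp only [mem_filter, mem_univ, true_and] at hy hy'
        funext k
        rcases eq_or_ne k i with rfl | hk
        · exact h
        · have h1 := congrFun hy k
          have h2 := congrFun hy' k
          simp only [hψ, Function.update_of_ne hk] at h1 h2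
          rw [h1, h2]
      · intro t ht
        simp only [mem_filter, mem_univ, true_and] at ht
        refine ⟨Function.update x i t, ?_, by simp⟩
        simp only [mem_filter, mem_univ, true_and]
        funext k
        rcases eq_or_ne k i with rfl | hk
        · simp only [hψ, Function.update_self, ht]
        · simp only [hψ, Function.update_of_ne hk]
    have hC := lemC (ha i) δ hδ hr (x i)
    have hCv : ∀ j, Nat.card {t : F // (δ : F) ^ j * t ^ a i = x i}
        = (univ.filter (fun t : F => (δ : F) ^ j * t ^ a i = x i)).card := fun j =>
      nat_card_eq_filter _
    rw [Finset.sum_congr rfl (fun j _ => by rw [hfe j, hbij j, ← hCv j])]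
    exact hC
  rw [Finset.sum_congr rfl hinner, Finset.sum_const, smul_eq_mul, mul_comm]

end LemB

/-- Under pairwise coprime weights, equality holds:
`r_i · N(F) = ∑_{j=0}^{r_i - 1} N(π_i^*(F ∘ σ_i^j))`. -/
theorem stmt14 (F : Type) [Field F] [Fintype F] (q n d : ℕ) (hq : Fintype.card F = q)
    (a : Fin (n + 1) → ℕ) (ha : ∀ i, 0 < a i)
    (hcop : ∀ k l : Fin (n + 1), k ≠ l → Nat.gcd (a k) (a l) = 1) (i : Fin (n + 1))
    (δ : Fˣ) (hδ : ∀ z : Fˣ, z ∈ Subgroup.zpowers δ)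
    (r : ℕ) (hr : r = Nat.gcd (a i) (q - 1))
    (Fp : MvPolynomial (Fin (n + 1)) F) (hF : WHomog F n a Fp d) :
    r * Nat.card (VRat F n a Fp) =
      ∑ j ∈ Finset.range r,
        Nat.card (VRat F n (Function.update a i 1)
          (pistar F n a i (sigmaPoly F n i (δ : F) j Fp))) := by
  classical
  subst hq
  have ha' : ∀ k, 0 < Function.update a i 1 k := by
    intro k
    rcases eq_or_ne k i with rfl | hk
    · simp
    · rw [Function.update_of_ne hk]; exact ha k
  have hcop' : ∀ k l : Fin (n + 1), k ≠ l →
      Nat.gcd (Function.update a i 1 k) (Function.update a i 1 l) = 1 := by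
    intro k l hkl
    rcases eq_or_ne k i with rfl | hk
    · rw [Function.update_self]; exact Nat.gcd_one_left _
    · rcases eq_or_ne l i with rfl | hl
      · rw [Function.update_of_ne hk, Function.update_self]; exact Nat.gcd_one_right _
      · rw [Function.update_of_ne hk, Function.update_of_ne hl]; exact hcop k l hkl
  have hq1 : 0 < Fintype.card F - 1 := by
    have := Fintype.one_lt_card (α := F)
    omega
  apply Nat.eq_of_mul_eq_mul_left hq1
  have hA := lemA ha hcop hF
  have hAj : ∀ j : ℕ, (Fintype.card F - 1) *
      Nat.card (VRat F n (Function.update a i 1)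
        (pistar F n a i (sigmaPoly F n i (δ : F) j Fp)))
      = Nat.card {y : Fin (n + 1) → F //
          y ≠ 0 ∧ eval y (pistar F n a i (sigmaPoly F n i (δ : F) j Fp)) = 0} :=
    fun j => lemA ha' hcop' (whomog_G i (δ : F) j hF)
  have hB := lemB a ha i δ hδ hr Fp
  calc (Fintype.card F - 1) * (r * Nat.card (VRat F n a Fp))
      = r * ((Fintype.card F - 1) * Nat.card (VRat F n a Fp)) := by ring
    _ = r * Nat.card {y : Fin (n + 1) → F // y ≠ 0 ∧ eval y Fp = 0} := by rw [hA]
    _ = ∑ j ∈ Finset.range r, Nat.card {y : Fin (n + 1) → F //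
          y ≠ 0 ∧ eval y (pistar F n a i (sigmaPoly F n i (δ : F) j Fp)) = 0} := hB
    _ = ∑ j ∈ Finset.range r, (Fintype.card F - 1) *
          Nat.card (VRat F n (Function.update a i 1)
            (pistar F n a i (sigmaPoly F n i (δ : F) j Fp))) :=
        Finset.sum_congr rfl (fun j _ => (hAj j).symm)
    _ = (Fintype.card F - 1) * ∑ j ∈ Finset.range r,
          Nat.card (VRat F n (Function.update a i 1)
            (pistar F n a i (sigmaPoly F n i (δ : F) j Fp))) := (Finset.mul_sum _ _ _).symm

end
end
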